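/- arXiv:0802.3946 — 9 statements merged into one kernel-verified Lean document; each statement's English description precedes it below -/
import Mathlib

section
/- Let X be a random variable with 0 ≤ X ≤ c almost surely, let Y be a random variable with a ≤ Y ≤ b almost surely, and let U be a random variable uniformly distributed on [0,1] that is independent of the pair (X, Y). Then for every real number δ, E[X] = E[Y] + δ·P(X ≥ Y + δ·U) + |c − a − δ|·P(X > Y + δ + |c − a − δ|·U) − b·P(X < b·U < Y). -/
open MeasureTheory ProbabilityTheory

section Aux
open Set

lemma vol_between {s : Set ℝ} {p q : ℝ} (h1 : Set.Ioo p q ⊆ s) (h2 : s ⊆ Set.Icc p q) :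
    volume s = ENNReal.ofReal (q - p) := by
  refine le_antisymm ?_ ?_
  · calc volume s ≤ volume (Set.Icc p q) := measure_mono h2
      _ = ENNReal.ofReal (q - p) := Real.volume_Icc
  · calc ENNReal.ofReal (q - p) = volume (Set.Ioo p q) := Real.volume_Ioo.symm
      _ ≤ volume s := measure_mono h1

lemma key_lemma {Ω : Type*} [MeasureSpace Ω] [IsProbabilityMeasure (ℙ : Measure Ω)]
    {α : Type*} [MeasurableSpace α] {V : Ω → α} {U : Ω → ℝ}
    (hV : Measurable V) (hUm : Measurable U)
    (hU : Measure.map U ℙ = volume.restrict (Set.Icc (0:ℝ) 1))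
    (hInd : IndepFun V U ℙ) {S : Set (α × ℝ)} (hS : MeasurableSet S) :
    ℙ {ω | (V ω, U ω) ∈ S} = ∫⁻ ω, (volume.restrict (Set.Icc (0:ℝ) 1)) (Prod.mk (V ω) ⁻¹' S) ∂ℙ := by
  have hmap : Measure.map (fun ω => (V ω, U ω)) ℙ = (Measure.map V ℙ).prod (Measure.map U ℙ) :=
    (indepFun_iff_map_prod_eq_prod_map_map hV.aemeasurable hUm.aemeasurable).mp hInd
  have h1 : ℙ {ω | (V ω, U ω) ∈ S} = Measure.map (fun ω => (V ω, U ω)) ℙ S := by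
    rw [Measure.map_apply (hV.prodMk hUm) hS]; rfl
  rw [h1, hmap, hU]
  have hpa : (Measure.map V ℙ).prod (volume.restrict (Set.Icc (0:ℝ) 1)) S
      = ∫⁻ v, (volume.restrict (Set.Icc (0:ℝ) 1)) (Prod.mk v ⁻¹' S) ∂(Measure.map V ℙ) :=
    Measure.prod_apply hS
  rw [hpa]
  exact lintegral_map (measurable_measure_prodMk_left (ν := volume.restrict (Set.Icc (0:ℝ) 1)) hS) hV

section Terms
variable {Ω : Type*} [MeasureSpace Ω] [IsProbabilityMeasure (ℙ : Measure Ω)]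
    {X Y U : Ω → ℝ} (hXm : Measurable X) (hYm : Measurable Y) (hUm : Measurable U)
    (hU : Measure.map U ℙ = volume.restrict (Set.Icc (0:ℝ) 1))
    (hInd : IndepFun (fun ω => (X ω, Y ω)) U ℙ)

include hXm hYm hUm hU hInd

lemma termA {t : ℝ} (ht : 0 < t) (κ : ℝ) :
    ℙ {ω | X ω ≥ Y ω + κ + t * U ω}
      = ∫⁻ ω, ENNReal.ofReal (max (min ((X ω - Y ω - κ)/t) 1) 0) ∂ℙ := by
  have hS : MeasurableSet {p : (ℝ × ℝ) × ℝ | p.1.2 + κ + t * p.2 ≤ p.1.1} :=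
    measurableSet_le (by fun_prop) (by fun_prop)
  have hk := key_lemma (V := fun ω => (X ω, Y ω)) (hXm.prodMk hYm) hUm hU hInd hS
  rw [show {ω | X ω ≥ Y ω + κ + t * U ω}
      = {ω | ((fun ω => (X ω, Y ω)) ω, U ω) ∈ {p : (ℝ × ℝ) × ℝ | p.1.2 + κ + t * p.2 ≤ p.1.1}}
      from rfl, hk]
  refine lintegral_congr fun ω => ?_
  rw [Measure.restrict_apply' measurableSet_Icc]
  set r : ℝ := (X ω - Y ω - κ)/t with hr
  have hsub : Prod.mk (X ω, Y ω) ⁻¹' {p : (ℝ × ℝ) × ℝ | p.1.2 + κ + t * p.2 ≤ p.1.1}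
      ∩ Set.Icc 0 1 ⊆ Set.Icc 0 (max (min r 1) 0) := by
    rintro u ⟨hu1, hu2, hu3⟩
    have hu1' : Y ω + κ + t * u ≤ X ω := hu1
    have : u ≤ r := by rw [hr, le_div_iff₀ ht]; linarith [mul_comm u t]
    exact ⟨hu2, le_max_of_le_left (le_min this hu3)⟩
  have hsup : Set.Ioo 0 (max (min r 1) 0)
      ⊆ Prod.mk (X ω, Y ω) ⁻¹' {p : (ℝ × ℝ) × ℝ | p.1.2 + κ + t * p.2 ≤ p.1.1}
      ∩ Set.Icc 0 1 := by
    rintro u ⟨hu0, hu1⟩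
    have hur : u < min r 1 := by
      rcases lt_max_iff.mp hu1 with h | h
      · exact h
      · linarith
    have h1 : u ≤ r := (lt_of_lt_of_le hur (min_le_left _ _)).le
    have h2 : u ≤ 1 := (lt_of_lt_of_le hur (min_le_right _ _)).le
    refine ⟨?_, hu0.le, h2⟩
    show Y ω + κ + t * u ≤ X ω
    have := (le_div_iff₀ ht).mp (hr ▸ h1)
    linarith [mul_comm u t]
  rw [vol_between hsup hsub, sub_zero]

lemma termB {t : ℝ} (ht : 0 < t) (κ : ℝ) :
    ℙ {ω | X ω > Y ω + κ + t * U ω}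
      = ∫⁻ ω, ENNReal.ofReal (max (min ((X ω - Y ω - κ)/t) 1) 0) ∂ℙ := by
  have hS : MeasurableSet {p : (ℝ × ℝ) × ℝ | p.1.2 + κ + t * p.2 < p.1.1} :=
    measurableSet_lt (by fun_prop) (by fun_prop)
  have hk := key_lemma (V := fun ω => (X ω, Y ω)) (hXm.prodMk hYm) hUm hU hInd hS
  rw [show {ω | X ω > Y ω + κ + t * U ω}
      = {ω | ((fun ω => (X ω, Y ω)) ω, U ω) ∈ {p : (ℝ × ℝ) × ℝ | p.1.2 + κ + t * p.2 < p.1.1}}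
      from rfl, hk]
  refine lintegral_congr fun ω => ?_
  rw [Measure.restrict_apply' measurableSet_Icc]
  set r : ℝ := (X ω - Y ω - κ)/t with hr
  have hsub : Prod.mk (X ω, Y ω) ⁻¹' {p : (ℝ × ℝ) × ℝ | p.1.2 + κ + t * p.2 < p.1.1}
      ∩ Set.Icc 0 1 ⊆ Set.Icc 0 (max (min r 1) 0) := by
    rintro u ⟨hu1, hu2, hu3⟩
    have hu1' : Y ω + κ + t * u < X ω := hu1
    have : u ≤ r := by rw [hr, le_div_iff₀ ht]; nlinarith [mul_comm u t]
    exact ⟨hu2, le_max_of_le_left (le_min this hu3)⟩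
  have hsup : Set.Ioo 0 (max (min r 1) 0)
      ⊆ Prod.mk (X ω, Y ω) ⁻¹' {p : (ℝ × ℝ) × ℝ | p.1.2 + κ + t * p.2 < p.1.1}
      ∩ Set.Icc 0 1 := by
    rintro u ⟨hu0, hu1⟩
    have hur : u < min r 1 := by
      rcases lt_max_iff.mp hu1 with h | h
      · exact h
      · linarith
    have h1 : u < r := lt_of_lt_of_le hur (min_le_left _ _)
    have h2 : u ≤ 1 := (lt_of_lt_of_le hur (min_le_right _ _)).le
    refine ⟨?_, hu0.le, h2⟩
    show Y ω + κ + t * u < X ω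
    have := (lt_div_iff₀ ht).mp (hr ▸ h1)
    linarith [mul_comm u t]
  rw [vol_between hsup hsub, sub_zero]

lemma termC {d : ℝ} (hd : d < 0) :
    ℙ {ω | X ω ≥ Y ω + d * U ω}
      = ∫⁻ ω, ENNReal.ofReal (max (1 - max ((X ω - Y ω)/d) 0) 0) ∂ℙ := by
  have hS : MeasurableSet {p : (ℝ × ℝ) × ℝ | p.1.2 + d * p.2 ≤ p.1.1} :=
    measurableSet_le (by fun_prop) (by fun_prop)
  have hk := key_lemma (V := fun ω => (X ω, Y ω)) (hXm.prodMk hYm) hUm hU hInd hS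
  rw [show {ω | X ω ≥ Y ω + d * U ω}
      = {ω | ((fun ω => (X ω, Y ω)) ω, U ω) ∈ {p : (ℝ × ℝ) × ℝ | p.1.2 + d * p.2 ≤ p.1.1}}
      from rfl, hk]
  refine lintegral_congr fun ω => ?_
  rw [Measure.restrict_apply' measurableSet_Icc]
  set r : ℝ := (X ω - Y ω)/d with hr
  have hsub : Prod.mk (X ω, Y ω) ⁻¹' {p : (ℝ × ℝ) × ℝ | p.1.2 + d * p.2 ≤ p.1.1}
      ∩ Set.Icc 0 1 ⊆ Set.Icc (max r 0) 1 := by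
    rintro u ⟨hu1, hu2, hu3⟩
    have hu1' : Y ω + d * u ≤ X ω := hu1
    have : r ≤ u := by rw [hr, div_le_iff_of_neg hd]; linarith [mul_comm u d]
    exact ⟨max_le this hu2, hu3⟩
  have hsup : Set.Ioo (max r 0) 1
      ⊆ Prod.mk (X ω, Y ω) ⁻¹' {p : (ℝ × ℝ) × ℝ | p.1.2 + d * p.2 ≤ p.1.1}
      ∩ Set.Icc 0 1 := by
    rintro u ⟨hu0, hu1⟩
    have h1 : r ≤ u := ((le_max_left _ _).trans_lt hu0).le
    have h0 : 0 ≤ u := ((le_max_right _ _).trans_lt hu0).le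
    refine ⟨?_, h0, hu1.le⟩
    show Y ω + d * u ≤ X ω
    have := (div_le_iff_of_neg hd).mp (hr ▸ h1)
    linarith [mul_comm u d]
  rw [vol_between hsup hsub]
  rcases le_total (1 - max r 0) 0 with h | h
  · rw [max_eq_right h, ENNReal.ofReal_eq_zero.mpr (by linarith), ENNReal.ofReal_eq_zero.mpr le_rfl]
  · rw [max_eq_left h]

lemma termD {b : ℝ} (hb : 0 < b) (hX0 : ∀ᵐ ω ∂ℙ, 0 ≤ X ω) (hYb : ∀ᵐ ω ∂ℙ, Y ω ≤ b) :
    ℙ {ω | X ω < b * U ω ∧ b * U ω < Y ω}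
      = ∫⁻ ω, ENNReal.ofReal (max ((Y ω - X ω)/b) 0) ∂ℙ := by
  have hS : MeasurableSet {p : (ℝ × ℝ) × ℝ | p.1.1 < b * p.2 ∧ b * p.2 < p.1.2} := by
    have heq : {p : (ℝ × ℝ) × ℝ | p.1.1 < b * p.2 ∧ b * p.2 < p.1.2}
        = {p : (ℝ × ℝ) × ℝ | p.1.1 < b * p.2} ∩ {p : (ℝ × ℝ) × ℝ | b * p.2 < p.1.2} := rfl
    rw [heq]
    exact (measurableSet_lt (by fun_prop) (by fun_prop)).inter
      (measurableSet_lt (by fun_prop) (by fun_prop))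
  have hk := key_lemma (V := fun ω => (X ω, Y ω)) (hXm.prodMk hYm) hUm hU hInd hS
  rw [show {ω | X ω < b * U ω ∧ b * U ω < Y ω}
      = {ω | ((fun ω => (X ω, Y ω)) ω, U ω) ∈ {p : (ℝ × ℝ) × ℝ | p.1.1 < b * p.2 ∧ b * p.2 < p.1.2}}
      from rfl, hk]
  refine lintegral_congr_ae ?_
  filter_upwards [hX0, hYb] with ω h0 hb'
  rw [Measure.restrict_apply' measurableSet_Icc]
  have hsub : Prod.mk (X ω, Y ω) ⁻¹' {p : (ℝ × ℝ) × ℝ | p.1.1 < b * p.2 ∧ b * p.2 < p.1.2}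
      ∩ Set.Icc 0 1 ⊆ Set.Icc (X ω / b) (Y ω / b) := by
    rintro u ⟨⟨hu1, hu2⟩, hu3, hu4⟩
    constructor
    · rw [div_le_iff₀ hb]; nlinarith [mul_comm u b]
    · rw [le_div_iff₀ hb]; nlinarith [mul_comm u b]
  have hsup : Set.Ioo (X ω / b) (Y ω / b)
      ⊆ Prod.mk (X ω, Y ω) ⁻¹' {p : (ℝ × ℝ) × ℝ | p.1.1 < b * p.2 ∧ b * p.2 < p.1.2}
      ∩ Set.Icc 0 1 := by
    rintro u ⟨hu0, hu1⟩
    have h1 : X ω < b * u := by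
      have := (div_lt_iff₀ hb).mp hu0
      linarith [mul_comm u b]
    have h2 : b * u < Y ω := by
      have := (lt_div_iff₀ hb).mp hu1
      linarith [mul_comm u b]
    have hl : 0 ≤ u := le_trans (div_nonneg h0 hb.le) hu0.le
    have hr : u ≤ 1 := le_trans hu1.le (div_le_one_of_le₀ hb' hb.le)
    exact ⟨⟨h1, h2⟩, hl, hr⟩
  rw [vol_between hsup hsub, ← sub_div]
  rcases le_total ((Y ω - X ω)/b) 0 with h | h
  · rw [max_eq_right h, ENNReal.ofReal_eq_zero.mpr h, ENNReal.ofReal_eq_zero.mpr le_rfl]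
  · rw [max_eq_left h]

end Terms

lemma ofReal_max0 (x : ℝ) : ENNReal.ofReal x = ENNReal.ofReal (max x 0) := by
  rcases le_total x 0 with h | h
  · rw [max_eq_right h, ENNReal.ofReal_eq_zero.mpr h]; simp
  · rw [max_eq_left h]

lemma R1 {t v : ℝ} (ht : 0 < t) : t * max (min (v/t) 1) 0 = min (max v 0) t := by
  rw [mul_max_of_nonneg _ _ ht.le, mul_min_of_nonneg _ _ ht.le, mul_one, mul_zero,
    mul_div_cancel₀ _ ht.ne']
  rcases le_total v 0 with h | h <;> rcases le_total v t with h2 | h2 <;>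
    simp only [min_def, max_def] <;> split_ifs <;> linarith

lemma R2 {d v : ℝ} (hd : d < 0) : d * max (1 - max (v/d) 0) 0 = d - max d (min v 0) := by
  have hdv : d * (v / d) = v := by rw [mul_comm, div_mul_cancel₀ _ hd.ne]
  rcases le_total 0 v with h | h
  · have h1 : v / d ≤ 0 := div_nonpos_iff.mpr (Or.inl ⟨h, hd.le⟩)
    rw [max_eq_right h1, sub_zero, max_eq_left (by norm_num : (0:ℝ) ≤ 1), mul_one,
      min_eq_right h, max_eq_right hd.le, sub_zero]
  · rcases le_total d v with h2 | h2
    · have h1 : 0 ≤ v / d := div_nonneg_iff.mpr (Or.inr ⟨h, hd.le⟩)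
      have h2' : v / d ≤ 1 := by
        rw [div_le_one_iff]
        exact Or.inr (Or.inr ⟨hd, h2⟩)
      rw [max_eq_left h1, max_eq_left (by linarith), mul_sub, mul_one, hdv,
        min_eq_left h, max_eq_right h2]
    · have h1 : 1 ≤ v / d := by
        rw [le_div_iff_of_neg hd, one_mul]; exact h2
      rw [max_eq_left (by linarith : (0:ℝ) ≤ v / d), max_eq_right (by linarith : 1 - v/d ≤ 0),
        mul_zero, min_eq_left h, max_eq_left h2, sub_self]

lemma R3 {b v : ℝ} (hb : 0 < b) : b * max (v/b) 0 = max v 0 := by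
  rw [mul_max_of_nonneg _ _ hb.le, mul_zero, mul_comm, div_mul_cancel₀ _ hb.ne']

lemma core_id (w δ M : ℝ) (hwM : w ≤ M) :
    (if 0 ≤ δ then min (max w 0) δ else δ - max δ (min w 0))
      + min (max (w - δ) 0) |M - δ| = max w 0 := by
  rcases abs_cases (M - δ) with ⟨h1, h2⟩ | ⟨h1, h2⟩ <;> split_ifs with hδ <;>
    simp only [min_def, max_def] <;> split_ifs <;> linarith


end Aux

/-- **Theorem 1.** Let `X` be a random variable with `0 ≤ X ≤ c` a.s., `Y` a random variable
with `a ≤ Y ≤ b` a.s., and `U` uniformly distributed on `[0,1]` independent of the pair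
`(X, Y)`.  Then for every real `δ`,
`E[X] = E[Y] + δ·P(X ≥ Y + δU) + |c − a − δ|·P(X > Y + δ + |c − a − δ|U) − b·P(X < bU < Y)`. -/
theorem expectation_link_identity
    {Ω : Type*} [MeasureSpace Ω] [IsProbabilityMeasure (ℙ : Measure Ω)]
    {c a b : ℝ} {X Y U : Ω → ℝ}
    (hXm : Measurable X) (hYm : Measurable Y) (hUm : Measurable U)
    (hX : ∀ᵐ ω ∂ℙ, 0 ≤ X ω ∧ X ω ≤ c)
    (hY : ∀ᵐ ω ∂ℙ, a ≤ Y ω ∧ Y ω ≤ b)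
    (hU : Measure.map U ℙ = volume.restrict (Set.Icc (0 : ℝ) 1))
    (hInd : IndepFun (fun ω => (X ω, Y ω)) U ℙ)
    (δ : ℝ) :
    ∫ ω, X ω ∂ℙ =
      (∫ ω, Y ω ∂ℙ)
        + δ * (ℙ {ω | X ω ≥ Y ω + δ * U ω}).toReal
        + |c - a - δ| * (ℙ {ω | X ω > Y ω + δ + |c - a - δ| * U ω}).toReal
        - b * (ℙ {ω | X ω < b * U ω ∧ b * U ω < Y ω}).toReal := by
  set e := |c - a - δ| with he
  have hX0 : ∀ᵐ ω ∂ℙ, 0 ≤ X ω := hX.mono fun ω h => h.1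
  have hYb : ∀ᵐ ω ∂ℙ, Y ω ≤ b := hY.mono fun ω h => h.2
  have hU01 : ∀ᵐ ω ∂ℙ, U ω ∈ Set.Icc (0:ℝ) 1 := by
    have h0 : ℙ (U ⁻¹' (Set.Icc (0:ℝ) 1)ᶜ) = 0 := by
      rw [← Measure.map_apply hUm measurableSet_Icc.compl, hU,
        Measure.restrict_apply measurableSet_Icc.compl]
      simp
    exact ae_iff.mpr h0
  have toRealInt : ∀ (g : Ω → ℝ), Measurable g → (∀ ω, 0 ≤ g ω) →
      (∫⁻ ω, ENNReal.ofReal (g ω) ∂ℙ).toReal = ∫ ω, g ω ∂ℙ := fun g hg hg0 =>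
    (integral_eq_lintegral_of_nonneg_ae (Filter.Eventually.of_forall hg0)
      hg.aestronglyMeasurable).symm
  set f1 : Ω → ℝ := fun ω =>
    if 0 ≤ δ then min (max (X ω - Y ω) 0) δ else δ - max δ (min (X ω - Y ω) 0) with hf1
  set f2 : Ω → ℝ := fun ω => min (max (X ω - Y ω - δ) 0) e with hf2
  set f3 : Ω → ℝ := fun ω => max (Y ω - X ω) 0 with hf3
  -- term 1
  have h1 : δ * (ℙ {ω | X ω ≥ Y ω + δ * U ω}).toReal = ∫ ω, f1 ω ∂ℙ := by
    rcases lt_trichotomy δ 0 with hδ | hδ | hδ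
    · rw [termC hXm hYm hUm hU hInd hδ,
        toRealInt _ (by fun_prop) (fun ω => le_max_right _ _), ← integral_const_mul]
      refine integral_congr_ae (Filter.Eventually.of_forall fun ω => ?_)
      simp only [hf1, if_neg (not_le.mpr hδ)]
      exact R2 hδ
    · subst hδ
      have : ∫ ω, f1 ω ∂ℙ = 0 := by
        rw [show f1 = fun _ => (0:ℝ) from ?_, integral_zero]
        funext ω
        simp only [hf1, if_pos le_rfl]
        exact min_eq_right (le_max_right _ _)
      rw [this, zero_mul]
    · have hset : {ω | X ω ≥ Y ω + δ * U ω} = {ω | X ω ≥ Y ω + 0 + δ * U ω} := by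
        ext ω; simp
      rw [hset, termA hXm hYm hUm hU hInd hδ 0,
        toRealInt _ (by fun_prop) (fun ω => le_max_right _ _), ← integral_const_mul]
      refine integral_congr_ae (Filter.Eventually.of_forall fun ω => ?_)
      simp only [hf1, if_pos hδ.le, sub_zero]
      exact R1 hδ
  -- term 2
  have h2 : e * (ℙ {ω | X ω > Y ω + δ + e * U ω}).toReal = ∫ ω, f2 ω ∂ℙ := by
    rcases (abs_nonneg (c - a - δ)).lt_or_eq with hε | hε
    · rw [← he] at hε
      rw [termB hXm hYm hUm hU hInd hε δ,
        toRealInt _ (by fun_prop) (fun ω => le_max_right _ _), ← integral_const_mul]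
      refine integral_congr_ae (Filter.Eventually.of_forall fun ω => ?_)
      simp only [hf2]
      exact R1 hε
    · rw [← he] at hε
      have : ∫ ω, f2 ω ∂ℙ = 0 := by
        rw [show f2 = fun _ => (0:ℝ) from ?_, integral_zero]
        funext ω
        simp only [hf2, ← hε]
        exact min_eq_right (le_max_right _ _)
      rw [this, ← hε, zero_mul]
  -- term 3
  have h3 : b * (ℙ {ω | X ω < b * U ω ∧ b * U ω < Y ω}).toReal = ∫ ω, f3 ω ∂ℙ := by
    rcases le_or_gt b 0 with hb | hb
    · have hP : ℙ {ω | X ω < b * U ω ∧ b * U ω < Y ω} = 0 := by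
        refine measure_eq_zero_iff_ae_notMem.mpr ?_
        filter_upwards [hX0, hU01] with ω h0 hu
        rintro ⟨hlt, -⟩
        have : b * U ω ≤ 0 := mul_nonpos_iff.mpr (Or.inr ⟨hb, hu.1⟩)
        linarith
      have hz : ∫ ω, f3 ω ∂ℙ = 0 := by
        have : f3 =ᵐ[ℙ] fun _ => (0:ℝ) := by
          filter_upwards [hX0, hYb] with ω h0 hb'
          simp only [hf3]
          exact max_eq_right (by linarith)
        rw [integral_congr_ae this, integral_zero]
      rw [hP, hz]
      simp
    · rw [termD hXm hYm hUm hU hInd hb hX0 hYb,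
        toRealInt _ (by fun_prop) (fun ω => le_max_right _ _), ← integral_const_mul]
      exact integral_congr_ae (Filter.Eventually.of_forall fun ω => R3 hb)
  -- integrability
  have bddInt : ∀ (g : Ω → ℝ) (C : ℝ), AEStronglyMeasurable g ℙ →
      (∀ᵐ ω ∂ℙ, |g ω| ≤ C) → Integrable g ℙ := fun g C hm hbd =>
    ⟨hm, HasFiniteIntegral.of_bounded (C := C) (by simpa [Real.norm_eq_abs] using hbd)⟩
  have hIY : Integrable Y ℙ := by
    refine bddInt Y (|a| + |b|) hYm.aestronglyMeasurable (hY.mono fun ω h => abs_le.mpr ⟨?_, ?_⟩)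
    · linarith [neg_abs_le a, abs_nonneg b, h.1]
    · linarith [le_abs_self b, abs_nonneg a, h.2]
  have hmf1 : Measurable f1 := by
    rw [hf1]
    by_cases h : 0 ≤ δ
    · simp only [if_pos h]; fun_prop
    · simp only [if_neg h]; fun_prop
  have hIf1 : Integrable f1 ℙ := by
    refine bddInt f1 |δ| hmf1.aestronglyMeasurable (Filter.Eventually.of_forall fun ω => ?_)
    simp only [hf1]
    split_ifs with h
    · rw [abs_of_nonneg (le_min (le_max_right _ _) h)]
      exact (min_le_right _ _).trans (le_abs_self δ)
    · push_neg at h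
      have h1 : δ ≤ max δ (min (X ω - Y ω) 0) := le_max_left _ _
      have h2 : max δ (min (X ω - Y ω) 0) ≤ 0 := max_le h.le (min_le_right _ _)
      rw [abs_of_nonpos (by linarith), abs_of_neg h]
      linarith
  have hIf2 : Integrable f2 ℙ := by
    refine bddInt f2 e ((by fun_prop : Measurable f2).aestronglyMeasurable)
      (Filter.Eventually.of_forall fun ω => ?_)
    simp only [hf2]
    rw [abs_of_nonneg (le_min (le_max_right _ _) (he ▸ abs_nonneg _))]
    exact min_le_right _ _
  have hIf3 : Integrable f3 ℙ := by
    refine bddInt f3 |b| ((by fun_prop : Measurable f3).aestronglyMeasurable) ?_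
    filter_upwards [hX0, hYb] with ω h0 hb'
    simp only [hf3]
    rw [abs_of_nonneg (le_max_right _ _)]
    exact max_le (by linarith [le_abs_self b]) (abs_nonneg b)
  -- a.e. identity
  have hae : ∀ᵐ ω ∂ℙ, X ω = Y ω + f1 ω + f2 ω - f3 ω := by
    filter_upwards [hX, hY] with ω hx hy
    have hwM : X ω - Y ω ≤ c - a := by linarith [hx.2, hy.1]
    have hc := core_id (X ω - Y ω) δ (c - a) hwM
    rw [← he] at hc
    have h3' : max (Y ω - X ω) 0 = max (X ω - Y ω) 0 - (X ω - Y ω) := by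
      rcases le_total (X ω - Y ω) 0 with h | h
      · rw [max_eq_left (by linarith), max_eq_right h]; ring
      · rw [max_eq_right (by linarith), max_eq_left h]; ring
    simp only [hf1, hf2, hf3]
    linarith [hc, h3']
  calc ∫ ω, X ω ∂ℙ = ∫ ω, (Y ω + f1 ω + f2 ω - f3 ω) ∂ℙ := integral_congr_ae hae
    _ = (∫ ω, Y ω ∂ℙ) + (∫ ω, f1 ω ∂ℙ) + (∫ ω, f2 ω ∂ℙ) - ∫ ω, f3 ω ∂ℙ := by
        have hIsum2 : Integrable (fun ω => Y ω + f1 ω) ℙ := hIY.add hIf1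
        have hIsum3 : Integrable (fun ω => Y ω + f1 ω + f2 ω) ℙ := hIsum2.add hIf2
        rw [integral_sub hIsum3 hIf3, integral_add hIsum2 hIf2, integral_add hIY hIf1]
    _ = (∫ ω, Y ω ∂ℙ)
        + δ * (ℙ {ω | X ω ≥ Y ω + δ * U ω}).toReal
        + e * (ℙ {ω | X ω > Y ω + δ + e * U ω}).toReal
        - b * (ℙ {ω | X ω < b * U ω ∧ b * U ω < Y ω}).toReal := by
        rw [← h1, ← h2, ← h3]
end

section
/- Let X be a random variable with 0 ≤ X ≤ c almost surely, let c₁ and c₂ be constants with 0 ≤ c₁ ≤ c₂ ≤ c, and let U be a random variable uniformly distributed on [0,1] that is independent of X. Then E[X] = c₁ + (c₂ − c₁)·P(X ≥ c₁ + (c₂ − c₁)·U) + (c − c₂)·P(X > c₂ + (c − c₂)·U) − c₁·P(X < c₁·U). -/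
open MeasureTheory ProbabilityTheory Set
open scoped ENNReal

lemma cov_lintegral (g : ℝ → ℝ≥0∞) (hg : Measurable g) (a h : ℝ) (hh : 0 < h) :
    ∫⁻ u in Set.Icc (0:ℝ) 1, g (a + h * u) =
      ENNReal.ofReal h⁻¹ * ∫⁻ t in Set.Icc a (a + h), g t := by
  have hme : Measurable (fun u : ℝ => a + h * u) := by fun_prop
  have hpre : (fun u : ℝ => a + h * u) ⁻¹' Set.Icc a (a + h) = Set.Icc 0 1 := by
    ext u
    simp only [Set.mem_preimage, Set.mem_Icc]
    constructor
    · rintro ⟨h1, h2⟩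
      constructor <;> nlinarith
    · rintro ⟨h1, h2⟩
      constructor <;> nlinarith
  have hmap : Measure.map (fun u : ℝ => a + h * u) volume
      = (ENNReal.ofReal h⁻¹) • volume := by
    have hcomp : (fun u : ℝ => a + h * u) = (fun x : ℝ => a + x) ∘ (fun u : ℝ => h * u) := rfl
    rw [hcomp, ← Measure.map_map (by fun_prop) (by fun_prop),
      Real.map_volume_mul_left hh.ne', Measure.map_smul,
      map_add_left_eq_self volume a, abs_of_pos (inv_pos.mpr hh)]
  calc ∫⁻ u in Set.Icc (0:ℝ) 1, g (a + h * u)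
      = ∫⁻ u in (fun u : ℝ => a + h * u) ⁻¹' Set.Icc a (a+h), g (a + h * u) := by rw [hpre]
    _ = ∫⁻ t, g t ∂(Measure.map (fun u : ℝ => a + h * u)
          (volume.restrict ((fun u : ℝ => a + h * u) ⁻¹' Set.Icc a (a+h)))) := by
        rw [lintegral_map hg hme]
    _ = ∫⁻ t, g t ∂((Measure.map (fun u : ℝ => a + h * u) volume).restrict (Set.Icc a (a+h))) := by
        rw [Measure.restrict_map hme measurableSet_Icc]
    _ = ENNReal.ofReal h⁻¹ * ∫⁻ t in Set.Icc a (a + h), g t := by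
        rw [hmap, Measure.restrict_smul, lintegral_smul_measure, smul_eq_mul]

lemma toReal_piece (g : ℝ → ℝ≥0∞) (hg : Measurable g) (hg1 : ∀ t, g t ≤ 1) (a h : ℝ) (hh : 0 < h) :
    h * (ENNReal.ofReal h⁻¹ * ∫⁻ t in Set.Icc a (a+h), g t).toReal
      = ∫ t in a..(a+h), (g t).toReal := by
  have hfin : ∫⁻ t in Set.Icc a (a+h), g t ≠ ∞ := by
    refine ne_of_lt (lt_of_le_of_lt (lintegral_mono fun t => hg1 t) ?_)
    simp only [lintegral_const, one_mul, Measure.restrict_apply_univ]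
    exact measure_Icc_lt_top
  have hL : (∫⁻ t in Set.Icc a (a+h), g t).toReal = ∫ t in Set.Icc a (a+h), (g t).toReal := by
    rw [integral_toReal (hg.aemeasurable.restrict)
      (Filter.Eventually.of_forall fun t => lt_of_le_of_lt (hg1 t) ENNReal.one_lt_top)]
  rw [ENNReal.toReal_mul, ENNReal.toReal_ofReal (inv_nonneg.mpr hh.le), hL,
    integral_Icc_eq_integral_Ioc, ← intervalIntegral.integral_of_le (by linarith : a ≤ a + h)]
  field_simp

lemma intInt_of_bounded {f : ℝ → ℝ} (hf : Measurable f) (hb : ∀ t, ‖f t‖ ≤ 1) (a b : ℝ) :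
    IntervalIntegrable f volume a b := by
  rw [intervalIntegrable_iff]
  exact Measure.integrableOn_of_bounded (by rw [Set.uIoc]; exact measure_Ioc_lt_top.ne)
    hf.aestronglyMeasurable (Filter.Eventually.of_forall fun t => hb t)

section pieces

variable {Ω : Type*} [MeasureSpace Ω] [IsProbabilityMeasure (ℙ : Measure Ω)]
    {X U : Ω → ℝ}
    (hXm : Measurable X) (hUm : Measurable U)
    (hU : Measure.map U ℙ = volume.restrict (Set.Icc (0 : ℝ) 1))
    (hInd : IndepFun X U ℙ)

include hXm in
lemma complement_eq (t : ℝ) :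
    (ℙ {ω | X ω ≤ t}).toReal = 1 - (ℙ {ω | t < X ω}).toReal := by
  have hcompl : {ω | t < X ω} = {ω | X ω ≤ t}ᶜ := by ext ω; simp [not_le]
  have hm : MeasurableSet {ω | X ω ≤ t} := hXm measurableSet_Iic
  have := measure_add_measure_compl (μ := (ℙ : Measure Ω)) hm
  rw [← hcompl] at this
  have h1 : (ℙ {ω | X ω ≤ t}).toReal + (ℙ {ω | t < X ω}).toReal = 1 := by
    rw [← ENNReal.toReal_add (measure_ne_top _ _) (measure_ne_top _ _), this]
    simp
  linarith

include hXm hUm hU hInd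

lemma prob_pair {S : Set (ℝ × ℝ)} (hS : MeasurableSet S) :
    ℙ {ω | (X ω, U ω) ∈ S} = ((Measure.map X ℙ).prod (volume.restrict (Set.Icc 0 1))) S := by
  rw [← hU, ← (indepFun_iff_map_prod_eq_prod_map_map hXm.aemeasurable hUm.aemeasurable).mp hInd,
    Measure.map_apply (hXm.prodMk hUm) hS]
  rfl

lemma piece_ge (a h : ℝ) (hh : 0 < h) :
    h * (ℙ {ω | a + h * U ω ≤ X ω}).toReal
      = ∫ t in a..(a+h), (ℙ {ω | t ≤ X ω}).toReal := by
  set μX := Measure.map X ℙ with hμX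
  haveI : IsProbabilityMeasure μX := Measure.isProbabilityMeasure_map hXm.aemeasurable
  have hgm : Measurable (fun t : ℝ => μX (Set.Ici t)) :=
    Antitone.measurable (fun s t hst => measure_mono (Set.Ici_subset_Ici.mpr hst))
  have hS : MeasurableSet {p : ℝ × ℝ | a + h * p.2 ≤ p.1} :=
    measurableSet_le (by fun_prop) (by fun_prop)
  have h1 : ℙ {ω | a + h * U ω ≤ X ω}
      = ENNReal.ofReal h⁻¹ * ∫⁻ t in Set.Icc a (a+h), μX (Set.Ici t) := by
    rw [show {ω | a + h * U ω ≤ X ω}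
        = {ω | (X ω, U ω) ∈ {p : ℝ × ℝ | a + h * p.2 ≤ p.1}} from rfl,
      prob_pair hXm hUm hU hInd hS, Measure.prod_apply_symm hS]
    exact cov_lintegral (fun t => μX (Set.Ici t)) hgm a h hh
  rw [h1, toReal_piece (fun t => μX (Set.Ici t)) hgm (fun t => prob_le_one) a h hh]
  refine intervalIntegral.integral_congr fun t _ => ?_
  rw [hμX, Measure.map_apply hXm measurableSet_Ici]
  rfl

lemma piece_gt (a h : ℝ) (hh : 0 < h) :
    h * (ℙ {ω | a + h * U ω < X ω}).toReal
      = ∫ t in a..(a+h), (ℙ {ω | t < X ω}).toReal := by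
  set μX := Measure.map X ℙ with hμX
  haveI : IsProbabilityMeasure μX := Measure.isProbabilityMeasure_map hXm.aemeasurable
  have hgm : Measurable (fun t : ℝ => μX (Set.Ioi t)) :=
    Antitone.measurable (fun s t hst => measure_mono (Set.Ioi_subset_Ioi hst))
  have hS : MeasurableSet {p : ℝ × ℝ | a + h * p.2 < p.1} :=
    measurableSet_lt (by fun_prop) (by fun_prop)
  have h1 : ℙ {ω | a + h * U ω < X ω}
      = ENNReal.ofReal h⁻¹ * ∫⁻ t in Set.Icc a (a+h), μX (Set.Ioi t) := by
    rw [show {ω | a + h * U ω < X ω}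
        = {ω | (X ω, U ω) ∈ {p : ℝ × ℝ | a + h * p.2 < p.1}} from rfl,
      prob_pair hXm hUm hU hInd hS, Measure.prod_apply_symm hS]
    exact cov_lintegral (fun t => μX (Set.Ioi t)) hgm a h hh
  rw [h1, toReal_piece (fun t => μX (Set.Ioi t)) hgm (fun t => prob_le_one) a h hh]
  refine intervalIntegral.integral_congr fun t _ => ?_
  rw [hμX, Measure.map_apply hXm measurableSet_Ioi]
  rfl

lemma piece_lt (h : ℝ) (hh : 0 < h) :
    h * (ℙ {ω | X ω < h * U ω}).toReal
      = ∫ t in (0:ℝ)..h, (ℙ {ω | X ω < t}).toReal := by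
  set μX := Measure.map X ℙ with hμX
  haveI : IsProbabilityMeasure μX := Measure.isProbabilityMeasure_map hXm.aemeasurable
  have hgm : Measurable (fun t : ℝ => μX (Set.Iio t)) :=
    Monotone.measurable (fun s t hst => measure_mono (Set.Iio_subset_Iio hst))
  have hS : MeasurableSet {p : ℝ × ℝ | p.1 < h * p.2} :=
    measurableSet_lt (by fun_prop) (by fun_prop)
  have h1 : ℙ {ω | X ω < h * U ω}
      = ENNReal.ofReal h⁻¹ * ∫⁻ t in Set.Icc 0 (0+h), μX (Set.Iio t) := by
    rw [show {ω | X ω < h * U ω}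
        = {ω | (X ω, U ω) ∈ {p : ℝ × ℝ | p.1 < h * p.2}} from rfl,
      prob_pair hXm hUm hU hInd hS, Measure.prod_apply_symm hS]
    have hsl : ∀ u : ℝ, ((fun x => (x, u)) ⁻¹' {p : ℝ × ℝ | p.1 < h * p.2})
        = Set.Iio (0 + h * u) := by
      intro u; ext x; simp
    simp_rw [hsl]
    exact cov_lintegral (fun t => μX (Set.Iio t)) hgm 0 h hh
  rw [h1, toReal_piece (fun t => μX (Set.Iio t)) hgm (fun t => prob_le_one) 0 h hh]
  rw [show (0:ℝ) + h = h from zero_add h]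
  refine intervalIntegral.integral_congr fun t _ => ?_
  rw [hμX, Measure.map_apply hXm measurableSet_Iio]
  rfl

end pieces

/-- **Corollary 1.** Let `X` be a random variable with `0 ≤ X ≤ c` a.s., let
`0 ≤ c₁ ≤ c₂ ≤ c`, and let `U` be uniformly distributed on `[0,1]` independent of `X`.  Then
`E[X] = c₁ + (c₂ − c₁)·P(X ≥ c₁ + (c₂ − c₁)U) + (c − c₂)·P(X > c₂ + (c − c₂)U) − c₁·P(X < c₁U)`. -/
theorem expectation_link_constants
    {Ω : Type*} [MeasureSpace Ω] [IsProbabilityMeasure (ℙ : Measure Ω)]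
    {c c₁ c₂ : ℝ} {X U : Ω → ℝ}
    (hXm : Measurable X) (hUm : Measurable U)
    (hX : ∀ᵐ ω ∂ℙ, 0 ≤ X ω ∧ X ω ≤ c)
    (hc₁ : 0 ≤ c₁) (hc₁₂ : c₁ ≤ c₂) (hc₂ : c₂ ≤ c)
    (hU : Measure.map U ℙ = volume.restrict (Set.Icc (0 : ℝ) 1))
    (hInd : IndepFun X U ℙ) :
    ∫ ω, X ω ∂ℙ =
      c₁ + (c₂ - c₁) * (ℙ {ω | X ω ≥ c₁ + (c₂ - c₁) * U ω}).toReal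
        + (c - c₂) * (ℙ {ω | X ω > c₂ + (c - c₂) * U ω}).toReal
        - c₁ * (ℙ {ω | X ω < c₁ * U ω}).toReal := by
  have hc0 : (0:ℝ) ≤ c := le_trans hc₁ (le_trans hc₁₂ hc₂)
  set g : ℝ → ℝ := fun t => (ℙ {ω | t < X ω}).toReal with hg
  set G : ℝ → ℝ := fun t => (ℙ {ω | t ≤ X ω}).toReal with hG
  set L : ℝ → ℝ := fun t => (ℙ {ω | X ω < t}).toReal with hL
  have hgm : Measurable g := by
    apply Measurable.ennreal_toReal
    exact Antitone.measurable (fun s t hst => measure_mono (fun ω hω => lt_of_le_of_lt hst hω))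
  have hGm : Measurable G := by
    apply Measurable.ennreal_toReal
    exact Antitone.measurable (fun s t hst => measure_mono (fun ω hω => le_trans hst hω))
  have hLm : Measurable L := by
    apply Measurable.ennreal_toReal
    exact Monotone.measurable (fun s t hst => measure_mono (fun ω hω => lt_of_lt_of_le hω hst))
  have hbound : ∀ (f : ℝ → ℝ≥0∞), (∀ t, f t ≤ 1) → ∀ t, ‖(f t).toReal‖ ≤ 1 := by
    intro f hf t
    rw [Real.norm_eq_abs, abs_of_nonneg ENNReal.toReal_nonneg]
    exact le_trans (ENNReal.toReal_mono ENNReal.one_ne_top (hf t)) (by simp)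
  have hgb : ∀ t, ‖g t‖ ≤ 1 := hbound _ (fun t => prob_le_one)
  have hGb : ∀ t, ‖G t‖ ≤ 1 := hbound _ (fun t => prob_le_one)
  have hLb : ∀ t, ‖L t‖ ≤ 1 := hbound _ (fun t => prob_le_one)
  have hgi : ∀ a b : ℝ, IntervalIntegrable g volume a b := intInt_of_bounded hgm hgb
  -- integrability of X
  have hInt : Integrable X ℙ := by
    refine (integrable_const c).mono' hXm.aestronglyMeasurable ?_
    filter_upwards [hX] with ω ⟨h0, h1⟩
    rw [Real.norm_eq_abs, abs_of_nonneg h0]; exact h1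
  -- layer cake
  have hlc : ∫ ω, X ω ∂ℙ = ∫ t in Set.Ioi (0:ℝ), g t :=
    hInt.integral_eq_integral_meas_lt (hX.mono fun ω hω => hω.1)
  -- g vanishes beyond c
  have hnull : ℙ {ω | c < X ω} = 0 := by
    have h := hX.mono fun ω hω => not_lt.mpr hω.2
    simpa [not_not] using ae_iff.mp h
  have hzero : ∀ t ∈ Set.Ioi c, g t = 0 := by
    intro t ht
    have : ℙ {ω | t < X ω} ≤ ℙ {ω | c < X ω} :=
      measure_mono (fun ω hω => show c < X ω from lt_trans ht hω)
    have h0 : ℙ {ω | t < X ω} = 0 := le_antisymm (hnull ▸ this) zero_le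
    show (ℙ {ω | t < X ω}).toReal = 0
    rw [h0]
    simp
  -- restrict to (0,c]
  have hsplit0 : ∫ t in Set.Ioi (0:ℝ), g t = ∫ t in (0:ℝ)..c, g t := by
    have hEq : Set.EqOn g 0 (Set.Ioi c) := fun t ht => hzero t ht
    have hIr : IntegrableOn g (Set.Ioi c) volume :=
      (integrableOn_congr_fun hEq measurableSet_Ioi).mpr (integrableOn_zero)
    have hIl : IntegrableOn g (Set.Ioc 0 c) volume := by
      have := (hgi 0 c)
      rw [intervalIntegrable_iff, Set.uIoc_of_le hc0] at this
      exact this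
    rw [← Set.Ioc_union_Ioi_eq_Ioi hc0,
      setIntegral_union (Set.Ioc_disjoint_Ioi le_rfl) measurableSet_Ioi hIl hIr,
      setIntegral_congr_fun measurableSet_Ioi hEq, intervalIntegral.integral_of_le hc0]
    simp
  -- split interval
  have hadd : ∫ t in (0:ℝ)..c, g t
      = (∫ t in (0:ℝ)..c₁, g t) + (∫ t in c₁..c₂, g t) + (∫ t in c₂..c, g t) := by
    rw [intervalIntegral.integral_add_adjacent_intervals (hgi 0 c₁) (hgi c₁ c₂),
      intervalIntegral.integral_add_adjacent_intervals (hgi 0 c₂) (hgi c₂ c)]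
  -- a.e. equality of G and g
  have haeGg : ∀ᵐ t ∂(volume : Measure ℝ), G t = g t := by
    filter_upwards [meas_le_ae_eq_meas_lt (ℙ : Measure Ω) (volume : Measure ℝ) X] with t ht
    rw [hG, hg]; simp only; rw [ht]
  -- a.e. equality of L and 1 - g-type
  have haeL : ∀ᵐ t ∂(volume : Measure ℝ), L t = 1 - G t := by
    filter_upwards [haeGg] with t ht
    have h2 : L t = 1 - g t := by
      rw [hL, hg]
      simp only
      have hcompl : {ω | X ω < t} = {ω | t ≤ X ω}ᶜ := by ext ω; simp [not_le]
      have hm : MeasurableSet {ω | t ≤ X ω} := hXm measurableSet_Ici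
      have hsum := measure_add_measure_compl (μ := (ℙ : Measure Ω)) hm
      rw [← hcompl] at hsum
      have : (ℙ {ω | t ≤ X ω}).toReal + (ℙ {ω | X ω < t}).toReal = 1 := by
        rw [← ENNReal.toReal_add (measure_ne_top _ _) (measure_ne_top _ _), hsum]; simp
      have hGg : (ℙ {ω | t ≤ X ω}).toReal = (ℙ {ω | t < X ω}).toReal := by
        have := ht; rw [hG, hg] at this; exact this
      linarith
    rw [h2, ht]
  -- piece 2
  have hp2 : ∫ t in c₁..c₂, g t
      = (c₂ - c₁) * (ℙ {ω | X ω ≥ c₁ + (c₂ - c₁) * U ω}).toReal := by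
    rcases eq_or_lt_of_le hc₁₂ with heq | hlt
    · rw [heq]; simp
    · have h12 : ∫ t in c₁..c₂, g t = ∫ t in c₁..c₂, G t := by
        refine intervalIntegral.integral_congr_ae ?_
        filter_upwards [haeGg] with t ht _
        exact ht.symm
      have key := piece_ge hXm hUm hU hInd c₁ (c₂ - c₁) (by linarith)
      rw [show c₁ + (c₂ - c₁) = c₂ by ring] at key
      have key2 : ∫ t in c₁..c₂, G t
          = (c₂ - c₁) * (ℙ {ω | X ω ≥ c₁ + (c₂ - c₁) * U ω}).toReal := key.symm
      exact h12.trans key2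
  -- piece 3
  have hp3 : ∫ t in c₂..c, g t
      = (c - c₂) * (ℙ {ω | X ω > c₂ + (c - c₂) * U ω}).toReal := by
    rcases eq_or_lt_of_le hc₂ with heq | hlt
    · rw [heq]; simp
    · have key := piece_gt hXm hUm hU hInd c₂ (c - c₂) (by linarith)
      rw [show c₂ + (c - c₂) = c by ring] at key
      have key2 : ∫ t in c₂..c, g t
          = (c - c₂) * (ℙ {ω | X ω > c₂ + (c - c₂) * U ω}).toReal := key.symm
      exact key2
  -- piece 1
  have hp1 : ∫ t in (0:ℝ)..c₁, g t
      = c₁ - c₁ * (ℙ {ω | X ω < c₁ * U ω}).toReal := by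
    have h1g : ∫ t in (0:ℝ)..c₁, g t = ∫ t in (0:ℝ)..c₁, (1 - L t) := by
      refine intervalIntegral.integral_congr_ae ?_
      filter_upwards [haeL, haeGg] with t ht htG _
      rw [ht, ← htG]; ring
    rw [h1g, intervalIntegral.integral_sub intervalIntegrable_const (intInt_of_bounded hLm hLb 0 c₁),
      intervalIntegral.integral_const]
    rcases eq_or_lt_of_le hc₁ with heq | hlt
    · rw [← heq]; simp
    · have key := piece_lt hXm hUm hU hInd c₁ hlt
      have key2 : ∫ t in (0:ℝ)..c₁, L t
          = c₁ * (ℙ {ω | X ω < c₁ * U ω}).toReal := key.symm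
      rw [key2]
      simp only [smul_eq_mul, sub_zero, mul_one]
  rw [hlc, hsplit0, hadd, hp1, hp2, hp3]
  ring
end

section
/- Let X be a random variable with 0 ≤ X ≤ c almost surely, let Y be a random variable with a ≤ Y ≤ b almost surely, let δ be a real number, set Z = Y + δ and v = a + δ, and let U be a random variable uniformly distributed on [0,1] that is independent of the pair (X, Y). Then E[X·1{X > Z}] = |c − v|·P(X > Z + |c − v|·U) + E[Z·1{X > Z}]. -/
open MeasureTheory ProbabilityTheory

/-- **Lemma 2.**  With `Z = Y + δ` and `v = a + δ`,
`E[X·1{X > Z}] = |c − v|·P(X > Z + |c − v|·U) + E[Z·1{X > Z}]`. -/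
theorem lemma2_indicator_identity
    {Ω : Type*} [MeasureSpace Ω] [IsProbabilityMeasure (ℙ : Measure Ω)]
    {c a b : ℝ} {X Y U : Ω → ℝ}
    (hXm : Measurable X) (hYm : Measurable Y) (hUm : Measurable U)
    (hX : ∀ᵐ ω ∂ℙ, 0 ≤ X ω ∧ X ω ≤ c)
    (hY : ∀ᵐ ω ∂ℙ, a ≤ Y ω ∧ Y ω ≤ b)
    (hU : Measure.map U ℙ = volume.restrict (Set.Icc (0 : ℝ) 1))
    (hInd : IndepFun (fun ω => (X ω, Y ω)) U ℙ)
    (δ : ℝ) (Z : Ω → ℝ) (hZ : Z = fun ω => Y ω + δ) (v : ℝ) (hv : v = a + δ) :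
    ∫ ω in {ω | X ω > Z ω}, X ω ∂ℙ =
      |c - v| * (ℙ {ω | X ω > Z ω + |c - v| * U ω}).toReal
        + ∫ ω in {ω | X ω > Z ω}, Z ω ∂ℙ := by
  subst hZ hv
  simp only [gt_iff_lt]
  set M : ℝ := |c - (a + δ)| with hM
  have hMnn : (0:ℝ) ≤ M := abs_nonneg _
  have hZm : Measurable (fun ω => Y ω + δ) := hYm.add_const δ
  have hWm : Measurable (fun ω => max (X ω - (Y ω + δ)) 0) :=
    (hXm.sub hZm).max measurable_const
  have hWnn : ∀ ω, 0 ≤ max (X ω - (Y ω + δ)) 0 := fun ω => le_max_right _ _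
  -- a.e. bound on W
  have hWle : ∀ᵐ ω ∂ℙ, max (X ω - (Y ω + δ)) 0 ≤ M := by
    filter_upwards [hX, hY] with ω hx hy
    have h1 : X ω - (Y ω + δ) ≤ c - (a + δ) := by linarith [hx.2, hy.1]
    exact max_le (h1.trans (le_abs_self _)) hMnn
  -- integrability facts
  have hXint : Integrable X ℙ := by
    refine Integrable.mono' (integrable_const |c|) hXm.aestronglyMeasurable ?_
    filter_upwards [hX] with ω hx
    rw [Real.norm_eq_abs, abs_of_nonneg hx.1]
    exact hx.2.trans (le_abs_self _)
  have hZint : Integrable (fun ω => Y ω + δ) ℙ := by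
    refine Integrable.mono' (integrable_const (max |a + δ| |b + δ|))
      hZm.aestronglyMeasurable ?_
    filter_upwards [hY] with ω hy
    rw [Real.norm_eq_abs]
    exact abs_le_max_abs_abs (by linarith [hy.1]) (by linarith [hy.2])
  have hWint : Integrable (fun ω => max (X ω - (Y ω + δ)) 0) ℙ := by
    refine Integrable.mono' (integrable_const M) hWm.aestronglyMeasurable ?_
    filter_upwards [hWle] with ω h
    rw [Real.norm_eq_abs, abs_of_nonneg (hWnn ω)]
    exact h
  -- the event S
  have hSmeas : MeasurableSet {ω | Y ω + δ < X ω} := measurableSet_lt hZm hXm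
  -- Step A
  have stepA : ∫ ω in {ω | Y ω + δ < X ω}, X ω ∂ℙ
      = (∫ ω, max (X ω - (Y ω + δ)) 0 ∂ℙ)
        + ∫ ω in {ω | Y ω + δ < X ω}, (Y ω + δ) ∂ℙ := by
    have h1 : ∫ ω, max (X ω - (Y ω + δ)) 0 ∂ℙ
        = ∫ ω in {ω | Y ω + δ < X ω}, (X ω - (Y ω + δ)) ∂ℙ := by
      rw [← integral_indicator hSmeas]
      congr 1
      funext ω
      by_cases h : Y ω + δ < X ω
      · rw [Set.indicator_of_mem (show ω ∈ {ω | Y ω + δ < X ω} from h)]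
        exact max_eq_left (by linarith)
      · rw [Set.indicator_of_notMem (show ω ∉ {ω | Y ω + δ < X ω} from h)]
        push_neg at h
        exact max_eq_right (by linarith)
    have h2 : ∫ ω in {ω | Y ω + δ < X ω}, (X ω - (Y ω + δ)) ∂ℙ
        = (∫ ω in {ω | Y ω + δ < X ω}, X ω ∂ℙ)
          - ∫ ω in {ω | Y ω + δ < X ω}, (Y ω + δ) ∂ℙ :=
      integral_sub hXint.restrict hZint.restrict
    rw [h1, h2]; ring
  -- tail probabilities vanish beyond M
  have hgzero : ∀ t : ℝ, M ≤ t → ℙ {ω | t < max (X ω - (Y ω + δ)) 0} = 0 := by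
    intro t ht
    have h : ∀ᵐ ω ∂ℙ, ¬ t < max (X ω - (Y ω + δ)) 0 := by
      filter_upwards [hWle] with ω h
      exact not_lt.2 (h.trans ht)
    simpa only [MeasureTheory.ae_iff, not_not] using h
  -- layer cake
  have layer : ∫ ω, max (X ω - (Y ω + δ)) 0 ∂ℙ
      = ∫ t in Set.Ioi (0:ℝ), (ℙ {ω | t < max (X ω - (Y ω + δ)) 0}).toReal :=
    hWint.integral_eq_integral_meas_lt (Filter.Eventually.of_forall hWnn)
  -- degenerate case M = 0
  rcases eq_or_lt_of_le hMnn with hM0 | hMpos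
  · have hc : c ≤ a + δ := by
      have h := abs_eq_zero.mp hM0.symm
      linarith [abs_eq_zero.mp hM0.symm]
    have hS0 : ℙ {ω | Y ω + δ < X ω} = 0 := by
      have h : ∀ᵐ ω ∂ℙ, ¬ Y ω + δ < X ω := by
        filter_upwards [hX, hY] with ω hx hy
        push_neg
        calc X ω ≤ c := hx.2
          _ ≤ a + δ := hc
          _ ≤ Y ω + δ := by linarith [hy.1]
      simpa only [MeasureTheory.ae_iff, not_not] using h
    have hr : (ℙ : Measure Ω).restrict {ω | Y ω + δ < X ω} = 0 :=
      Measure.restrict_eq_zero.mpr hS0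
    simp [hr, ← hM0]
  -- main case M > 0
  have hXYm : Measurable fun ω => (X ω, Y ω) := hXm.prodMk hYm
  set ν : Measure (ℝ × ℝ) := Measure.map (fun ω => (X ω, Y ω)) ℙ with hν
  haveI : IsProbabilityMeasure ν := Measure.isProbabilityMeasure_map hXYm.aemeasurable
  have hprod : Measure.map (fun ω => (U ω, (X ω, Y ω))) ℙ
      = (Measure.map U ℙ).prod ν :=
    (indepFun_iff_map_prod_eq_prod_map_map hUm.aemeasurable hXYm.aemeasurable).mp
      hInd.symm
  set S2 : Set (ℝ × (ℝ × ℝ)) := {p | p.2.2 + δ + M * p.1 < p.2.1} with hS2def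
  have hS2 : MeasurableSet S2 :=
    measurableSet_lt
      (((measurable_snd.comp measurable_snd).add_const δ).add
        (measurable_fst.const_mul M)) (measurable_fst.comp measurable_snd)
  have hsliceMeas : ∀ u : ℝ, MeasurableSet {q : ℝ × ℝ | q.2 + δ + M * u < q.1} :=
    fun u => measurableSet_lt ((measurable_snd.add_const δ).add_const (M * u))
      measurable_fst
  have hfν : ∀ u : ℝ, ℙ {ω | Y ω + δ + M * u < X ω} = ν (Prod.mk u ⁻¹' S2) := by
    intro u
    have hpre : Prod.mk u ⁻¹' S2 = {q : ℝ × ℝ | q.2 + δ + M * u < q.1} := rfl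
    rw [hpre, hν, Measure.map_apply hXYm (hsliceMeas u)]
    rfl
  have hfm : Measurable (fun u : ℝ => ℙ {ω | Y ω + δ + M * u < X ω}) := by
    have heq : (fun u : ℝ => ℙ {ω | Y ω + δ + M * u < X ω})
        = fun u => ν (Prod.mk u ⁻¹' S2) := funext hfν
    rw [heq]
    exact measurable_measure_prodMk_left hS2
  -- the probability as a lintegral over [0,1]
  have hPmain : ℙ {ω | Y ω + δ + M * U ω < X ω}
      = ∫⁻ u in Set.Icc (0:ℝ) 1, ℙ {ω | Y ω + δ + M * u < X ω} := by
    have hpre : {ω | Y ω + δ + M * U ω < X ω}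
        = (fun ω => (U ω, (X ω, Y ω))) ⁻¹' S2 := rfl
    rw [hpre, ← Measure.map_apply (hUm.prodMk hXYm) hS2, hprod,
      Measure.prod_apply hS2, hU]
    exact lintegral_congr fun u => (hfν u).symm
  -- convert to a Bochner integral
  have hPtoReal : (ℙ {ω | Y ω + δ + M * U ω < X ω}).toReal
      = ∫ u in Set.Icc (0:ℝ) 1, (ℙ {ω | Y ω + δ + M * u < X ω}).toReal := by
    rw [hPmain, integral_toReal hfm.aemeasurable.restrict
      (Filter.Eventually.of_forall fun u => measure_lt_top _ _)]
  -- relate the two integrands on (0,1)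
  have hfg : ∀ u ∈ Set.Ioo (0:ℝ) 1,
      (ℙ {ω | Y ω + δ + M * u < X ω}).toReal
        = (ℙ {ω | M * u < max (X ω - (Y ω + δ)) 0}).toReal := by
    intro u hu
    have hMu : 0 < M * u := mul_pos hMpos hu.1
    have hset : {ω | Y ω + δ + M * u < X ω}
        = {ω | M * u < max (X ω - (Y ω + δ)) 0} := by
      ext ω
      simp only [Set.mem_setOf_eq, lt_max_iff]
      constructor
      · intro h; left; linarith
      · rintro (h | h)
        · linarith
        · exact absurd h (not_lt.2 hMu.le)
    rw [hset]
  -- restrict layer cake to (0, M)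
  have hIoiIoo : ∫ t in Set.Ioi (0:ℝ), (ℙ {ω | t < max (X ω - (Y ω + δ)) 0}).toReal
      = ∫ t in Set.Ioo (0:ℝ) M, (ℙ {ω | t < max (X ω - (Y ω + δ)) 0}).toReal := by
    rw [← integral_indicator measurableSet_Ioi, ← integral_indicator measurableSet_Ioo]
    congr 1
    funext t
    by_cases h1 : t ∈ Set.Ioo (0:ℝ) M
    · rw [Set.indicator_of_mem h1, Set.indicator_of_mem (Set.mem_Ioi.2 h1.1)]
    · rw [Set.indicator_of_notMem h1]
      by_cases h2 : t ∈ Set.Ioi (0:ℝ)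
      · rw [Set.indicator_of_mem h2]
        have hMt : M ≤ t := by
          by_contra hcon
          exact h1 ⟨h2, not_le.mp hcon⟩
        rw [hgzero t hMt, ENNReal.toReal_zero]
      · rw [Set.indicator_of_notMem h2]
  -- substitution t = M u
  have hsubst : ∫ t in Set.Ioo (0:ℝ) M, (ℙ {ω | t < max (X ω - (Y ω + δ)) 0}).toReal
      = M * ∫ u in Set.Ioo (0:ℝ) 1,
          (ℙ {ω | M * u < max (X ω - (Y ω + δ)) 0}).toReal := by
    have h1 : ∫ t in Set.Ioo (0:ℝ) M, (ℙ {ω | t < max (X ω - (Y ω + δ)) 0}).toReal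
        = ∫ t in (0:ℝ)..M, (ℙ {ω | t < max (X ω - (Y ω + δ)) 0}).toReal := by
      rw [intervalIntegral.integral_of_le hMnn, integral_Ioc_eq_integral_Ioo]
    have h2 : ∫ u in Set.Ioo (0:ℝ) 1,
          (ℙ {ω | M * u < max (X ω - (Y ω + δ)) 0}).toReal
        = ∫ u in (0:ℝ)..1, (ℙ {ω | M * u < max (X ω - (Y ω + δ)) 0}).toReal := by
      rw [intervalIntegral.integral_of_le (by norm_num : (0:ℝ) ≤ 1),
        integral_Ioc_eq_integral_Ioo]
    rw [h1, h2]
    have h3 := intervalIntegral.smul_integral_comp_mul_left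
      (a := (0:ℝ)) (b := (1:ℝ))
      (fun t => (ℙ {ω | t < max (X ω - (Y ω + δ)) 0}).toReal) M
    rw [mul_zero, mul_one] at h3
    rw [← h3, smul_eq_mul]
  -- put everything together
  have hfinal : ∫ ω, max (X ω - (Y ω + δ)) 0 ∂ℙ
      = M * (ℙ {ω | Y ω + δ + M * U ω < X ω}).toReal := by
    rw [layer, hIoiIoo, hsubst, hPtoReal, integral_Icc_eq_integral_Ioo]
    congr 1
    exact setIntegral_congr_fun measurableSet_Ioo fun u hu => (hfg u hu).symm
  rw [stepA, hfinal]
end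

section
/- Let X be a random variable with 0 ≤ X ≤ c almost surely, let Y be a random variable with a ≤ Y ≤ b almost surely, and let U be a random variable uniformly distributed on [0,1] that is independent of the pair (X, Y). Then E[X·1{X < Y}] = b·P(Y > X and X ≥ b·U). -/
open MeasureTheory ProbabilityTheory
open scoped ENNReal

/-- **Lemma 3.**  `E[X·1{X < Y}] = b·P(Y > X ≥ bU)`. -/
theorem lemma3_indicator_identity
    {Ω : Type*} [MeasureSpace Ω] [IsProbabilityMeasure (ℙ : Measure Ω)]
    {c a b : ℝ} {X Y U : Ω → ℝ}
    (hXm : Measurable X) (hYm : Measurable Y) (hUm : Measurable U)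
    (hX : ∀ᵐ ω ∂ℙ, 0 ≤ X ω ∧ X ω ≤ c)
    (hY : ∀ᵐ ω ∂ℙ, a ≤ Y ω ∧ Y ω ≤ b)
    (hU : Measure.map U ℙ = volume.restrict (Set.Icc (0 : ℝ) 1))
    (hInd : IndepFun (fun ω => (X ω, Y ω)) U ℙ) :
    ∫ ω in {ω | X ω < Y ω}, X ω ∂ℙ =
      b * (ℙ {ω | Y ω > X ω ∧ X ω ≥ b * U ω}).toReal := by
  rcases le_or_gt b 0 with hb | hb
  · -- degenerate case b ≤ 0: both sides vanish
    have hnull : ∀ᵐ ω ∂ℙ, ¬ (X ω < Y ω) := by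
      filter_upwards [hX, hY] with ω hx hy
      push_neg
      linarith [hx.1, hy.2]
    have hs0 : ℙ {ω | X ω < Y ω} = 0 := by
      rw [ae_iff] at hnull; simpa using hnull
    have hA0 : ℙ {ω | Y ω > X ω ∧ X ω ≥ b * U ω} = 0 :=
      measure_mono_null (fun ω hω => hω.1) hs0
    rw [Measure.restrict_eq_zero.mpr hs0, integral_zero_measure, hA0]
    simp
  · -- main case b > 0
    set T : Set (ℝ × ℝ) := {p | p.1 < p.2} with hT
    have hTmeas : MeasurableSet T := measurableSet_lt measurable_fst measurable_snd
    set μ : Measure (ℝ × ℝ) := Measure.map (fun ω => (X ω, Y ω)) ℙ with hμ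
    have hpm : Measurable (fun ω => (X ω, Y ω)) := hXm.prodMk hYm
    have hμae : ∀ᵐ p ∂μ, 0 ≤ p.1 ∧ p.1 ≤ c ∧ p.2 ≤ b := by
      rw [hμ, ae_map_iff hpm.aemeasurable]
      · filter_upwards [hX, hY] with ω hx hy using ⟨hx.1, hx.2, hy.2⟩
      · exact (measurableSet_le measurable_const measurable_fst).inter
          ((measurableSet_le measurable_fst measurable_const).inter
            (measurableSet_le measurable_snd measurable_const))
    -- the key lintegral
    set L : ℝ≥0∞ := ∫⁻ p in T, ENNReal.ofReal p.1 ∂μ with hL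
    have hLfin : L ≠ ⊤ := by
      have : L ≤ ∫⁻ p in T, ENNReal.ofReal b ∂μ := by
        refine lintegral_mono_ae ?_
        filter_upwards [ae_restrict_of_ae hμae, ae_restrict_mem hTmeas] with p hp hpT
        exact ENNReal.ofReal_le_ofReal (by linarith [hp.2.2, (show p.1 < p.2 from hpT)])
      refine ne_of_lt (lt_of_le_of_lt this ?_)
      rw [setLIntegral_const]
      exact ENNReal.mul_lt_top ENNReal.ofReal_lt_top (measure_lt_top _ _)
    -- LHS = L.toReal
    have hLHS : ∫ ω in {ω | X ω < Y ω}, X ω ∂ℙ = L.toReal := by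
      have hpre : {ω | X ω < Y ω} = (fun ω => (X ω, Y ω)) ⁻¹' T := rfl
      have h1 : ∫ ω in {ω | X ω < Y ω}, X ω ∂ℙ
          = (∫⁻ ω in {ω | X ω < Y ω}, ENNReal.ofReal (X ω) ∂ℙ).toReal := by
        refine integral_eq_lintegral_of_nonneg_ae ?_ ?_
        · exact ae_restrict_of_ae (hX.mono fun ω hω => hω.1)
        · exact hXm.aestronglyMeasurable.restrict
      rw [h1, hL]
      congr 1
      rw [hμ, Measure.restrict_map hpm hTmeas, lintegral_map (by measurability) hpm]
      rfl
    -- RHS probability as a lintegral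
    have hRHS : ℙ {ω | Y ω > X ω ∧ X ω ≥ b * U ω}
        = ENNReal.ofReal (1 / b) * L := by
      set S : Set ((ℝ × ℝ) × ℝ) := {p | p.1.1 < p.1.2 ∧ b * p.2 ≤ p.1.1} with hS
      have hSmeas : MeasurableSet S :=
        (measurableSet_lt (measurable_fst.comp measurable_fst)
            (measurable_snd.comp measurable_fst)).inter
          (measurableSet_le (measurable_const.mul measurable_snd)
            (measurable_fst.comp measurable_fst))
      have hmap : Measure.map (fun ω => ((X ω, Y ω), U ω)) ℙ
          = μ.prod (volume.restrict (Set.Icc (0 : ℝ) 1)) := by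
        rw [hμ, ← hU]
        exact (indepFun_iff_map_prod_eq_prod_map_map hpm.aemeasurable hUm.aemeasurable).mp hInd
      have h1 : ℙ {ω | Y ω > X ω ∧ X ω ≥ b * U ω}
          = Measure.map (fun ω => ((X ω, Y ω), U ω)) ℙ S := by
        rw [Measure.map_apply (hpm.prodMk hUm) hSmeas]
        rfl
      rw [h1, hmap, Measure.prod_apply hSmeas]
      have h2 : ∀ᵐ p ∂μ, (volume.restrict (Set.Icc (0 : ℝ) 1)) (Prod.mk p ⁻¹' S)
          = T.indicator (fun p => ENNReal.ofReal (p.1 / b)) p := by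
        filter_upwards [hμae] with p hp
        by_cases hlt : p.1 < p.2
        · have hset : Prod.mk p ⁻¹' S = Set.Iic (p.1 / b) := by
            ext u
            simp only [hS, Set.mem_preimage, Set.mem_setOf_eq, Set.mem_Iic, hlt, true_and]
            rw [mul_comm, ← le_div_iff₀ hb]
          rw [hset, Set.indicator_of_mem (show p ∈ T from hlt)]
          rw [Measure.restrict_apply measurableSet_Iic]
          have : Set.Iic (p.1 / b) ∩ Set.Icc (0:ℝ) 1 = Set.Icc 0 (p.1 / b) := by
            ext u
            simp only [Set.mem_inter_iff, Set.mem_Iic, Set.mem_Icc]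
            constructor
            · rintro ⟨h1', h2', _⟩; exact ⟨h2', h1'⟩
            · rintro ⟨h1', h2'⟩
              refine ⟨h2', h1', h2'.trans ?_⟩
              rw [div_le_one hb]
              linarith [hp.2.2, hlt]
          rw [this, Real.volume_Icc, sub_zero]
        · have hset : Prod.mk p ⁻¹' S = ∅ := by
            ext u
            simp only [hS, Set.mem_preimage, Set.mem_setOf_eq, Set.mem_empty_iff_false,
              iff_false, not_and]
            intro h; exact absurd h hlt
          rw [hset, Set.indicator_of_notMem (show p ∉ T from hlt)]
          simp
      rw [lintegral_congr_ae h2, lintegral_indicator hTmeas]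
      rw [hL, ← lintegral_const_mul' _ _ ENNReal.ofReal_lt_top.ne]
      refine setLIntegral_congr_fun_ae hTmeas ?_
      filter_upwards [hμae] with p hp hpT
      rw [← ENNReal.ofReal_mul (by positivity), one_div, inv_mul_eq_div]
    rw [hLHS, hRHS, ENNReal.toReal_mul, ENNReal.toReal_ofReal (by positivity)]
    field_simp
end

section
/- Let X be a random variable with 0 ≤ X ≤ c almost surely, let Y be a random variable with a ≤ Y ≤ b almost surely, and let U be a random variable uniformly distributed on [0,1] that is independent of the pair (X, Y). Then E[Y·1{X < Y}] = b·P(Y > X and Y > b·U). -/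
open MeasureTheory ProbabilityTheory

/-- **Lemma 4.**  `E[Y·1{X < Y}] = b·P(Y > X and Y > bU)`. -/
theorem lemma4_indicator_identity
    {Ω : Type*} [MeasureSpace Ω] [IsProbabilityMeasure (ℙ : Measure Ω)]
    {c a b : ℝ} {X Y U : Ω → ℝ}
    (hXm : Measurable X) (hYm : Measurable Y) (hUm : Measurable U)
    (hX : ∀ᵐ ω ∂ℙ, 0 ≤ X ω ∧ X ω ≤ c)
    (hY : ∀ᵐ ω ∂ℙ, a ≤ Y ω ∧ Y ω ≤ b)
    (hU : Measure.map U ℙ = volume.restrict (Set.Icc (0 : ℝ) 1))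
    (hInd : IndepFun (fun ω => (X ω, Y ω)) U ℙ) :
    ∫ ω in {ω | X ω < Y ω}, Y ω ∂ℙ =
      b * (ℙ {ω | Y ω > X ω ∧ Y ω > b * U ω}).toReal := by
  have hXYm : Measurable (fun ω => (X ω, Y ω)) := hXm.prodMk hYm
  rcases le_or_gt b 0 with hb | hb
  · -- degenerate case: {X < Y} is null
    have hae : ∀ᵐ ω ∂ℙ, ¬ X ω < Y ω := by
      filter_upwards [hX, hY] with ω ⟨hx0, _⟩ ⟨_, hyb⟩
      exact not_lt.mpr (hyb.trans (hb.trans hx0))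
    have hnull : ℙ {ω | X ω < Y ω} = 0 := by
      rw [ae_iff] at hae; simpa using hae
    have h2 : ℙ {ω | Y ω > X ω ∧ Y ω > b * U ω} = 0 := by
      refine measure_mono_null (fun ω hω => hω.1) hnull
    rw [h2, Measure.restrict_eq_zero.mpr hnull]
    simp
  · -- main case b > 0
    set ν : Measure (ℝ × ℝ) := Measure.map (fun ω => (X ω, Y ω)) ℙ with hν
    set A : Set (ℝ × ℝ) := {p | p.1 < p.2} with hA
    have hAm : MeasurableSet A := measurableSet_lt measurable_fst measurable_snd
    set f : ℝ × ℝ → ℝ := fun p => p.2 / b with hf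
    set S : Set ((ℝ × ℝ) × ℝ) := {q | q.1.1 < q.1.2 ∧ b * q.2 < q.1.2} with hS
    have hSm : MeasurableSet S := by
      apply MeasurableSet.inter
      · exact measurableSet_lt (measurable_fst.comp measurable_fst)
          (measurable_snd.comp measurable_fst)
      · exact measurableSet_lt (measurable_snd.const_mul b)
          (measurable_snd.comp measurable_fst)
    have hmap : Measure.map (fun ω => ((X ω, Y ω), U ω)) ℙ = ν.prod (Measure.map U ℙ) :=
      (indepFun_iff_map_prod_eq_prod_map_map hXYm.aemeasurable hUm.aemeasurable).mp hInd
    -- a.e. property pushed to ν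
    have hQae : ∀ᵐ p ∂ν, 0 ≤ p.1 ∧ p.2 ≤ b := by
      rw [hν, ae_map_iff hXYm.aemeasurable]
      · filter_upwards [hX, hY] with ω ⟨hx0, _⟩ ⟨_, hyb⟩
        exact ⟨hx0, hyb⟩
      · exact (measurableSet_le measurable_const measurable_fst).inter
          (measurableSet_le measurable_snd measurable_const)
    -- compute the probability
    have hprob : ℙ {ω | Y ω > X ω ∧ Y ω > b * U ω}
        = ∫⁻ p, ENNReal.ofReal (A.indicator f p) ∂ν := by
      have h1 : {ω | Y ω > X ω ∧ Y ω > b * U ω}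
          = (fun ω => ((X ω, Y ω), U ω)) ⁻¹' S := by
        ext ω; simp [hS, and_comm]
      rw [h1, ← Measure.map_apply (hXYm.prodMk hUm) hSm, hmap, hU,
        Measure.prod_apply hSm]
      refine lintegral_congr_ae ?_
      filter_upwards [hQae] with p ⟨hp0, hpb⟩
      by_cases hpA : p ∈ A
      · have hpos : 0 < p.2 := lt_of_le_of_lt hp0 hpA
        have h2 : (Prod.mk p ⁻¹' S) = Set.Iio (p.2 / b) := by
          ext u
          simp only [hS, Set.mem_preimage, Set.mem_setOf_eq, Set.mem_Iio]
          rw [← lt_div_iff₀' hb]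
          exact ⟨fun h => h.2, fun h => ⟨hpA, h⟩⟩
        have ht0 : 0 < p.2 / b := div_pos hpos hb
        have ht1 : p.2 / b ≤ 1 := (div_le_one hb).mpr hpb
        rw [h2, Measure.restrict_apply' measurableSet_Icc]
        have h3 : Set.Iio (p.2 / b) ∩ Set.Icc (0:ℝ) 1 = Set.Ico 0 (p.2 / b) := by
          ext u
          simp only [Set.mem_inter_iff, Set.mem_Iio, Set.mem_Icc, Set.mem_Ico]
          exact ⟨fun ⟨h, h0, _⟩ => ⟨h0, h⟩, fun ⟨h0, h⟩ => ⟨h, h0, le_of_lt (lt_of_lt_of_le h ht1)⟩⟩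
        rw [h3, Real.volume_Ico, Set.indicator_of_mem hpA]
        simp [hf]
      · have h2 : (Prod.mk p ⁻¹' S) = ∅ := by
          ext u
          simp only [hS, Set.mem_preimage, Set.mem_setOf_eq, Set.mem_empty_iff_false, iff_false]
          exact fun h => hpA h.1
        rw [h2, Set.indicator_of_notMem hpA]
        simp
    -- convert lintegral to integral
    have hgm : Measurable (A.indicator f) :=
      (measurable_snd.div_const b).indicator hAm
    have hgnn : ∀ᵐ p ∂ν, 0 ≤ A.indicator f p := by
      filter_upwards [hQae] with p ⟨hp0, _⟩
      by_cases hpA : p ∈ A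
      · rw [Set.indicator_of_mem hpA]
        exact div_nonneg (le_of_lt (lt_of_le_of_lt hp0 hpA)) hb.le
      · rw [Set.indicator_of_notMem hpA]
    have hint : ∫ p, A.indicator f p ∂ν
        = (∫⁻ p, ENNReal.ofReal (A.indicator f p) ∂ν).toReal :=
      integral_eq_lintegral_of_nonneg_ae hgnn hgm.aestronglyMeasurable
    -- rewrite LHS as an integral over ν
    have hLHS : ∫ ω in {ω | X ω < Y ω}, Y ω ∂ℙ = ∫ p in A, p.2 ∂ν := by
      rw [hν, setIntegral_map hAm measurable_snd.aestronglyMeasurable hXYm.aemeasurable]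
      rfl
    rw [hLHS, hprob, ← hint, ← integral_indicator hAm]
    rw [← integral_const_mul]
    congr 1
    ext p
    by_cases hpA : p ∈ A
    · rw [Set.indicator_of_mem hpA, Set.indicator_of_mem hpA, hf,
        mul_div_cancel₀ _ (ne_of_gt hb)]
    · rw [Set.indicator_of_notMem hpA, Set.indicator_of_notMem hpA, mul_zero]
end

section
/- Let X be a random variable with 0 ≤ X ≤ c almost surely, let Y be a random variable with a ≤ Y ≤ b almost surely, let δ be a real number, set Z = Y + δ, and let U be a random variable uniformly distributed on [0,1] that is independent of the pair (X, Y). Then E[X·1{Y ≤ X ≤ Z}] = δ·P(Z ≥ X ≥ Y + δ·U) + E[Y·1{Y ≤ X ≤ Z}]. -/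
open MeasureTheory ProbabilityTheory

/-- The claim `(1)` in the proof of Lemma 1: with `Z = Y + δ`,
`E[X·1{Y ≤ X ≤ Z}] = δ·P(Z ≥ X ≥ Y + δU) + E[Y·1{Y ≤ X ≤ Z}]`. -/
theorem claim_indicator_identity
    {Ω : Type*} [MeasureSpace Ω] [IsProbabilityMeasure (ℙ : Measure Ω)]
    {c a b : ℝ} {X Y U : Ω → ℝ}
    (hXm : Measurable X) (hYm : Measurable Y) (hUm : Measurable U)
    (hX : ∀ᵐ ω ∂ℙ, 0 ≤ X ω ∧ X ω ≤ c)
    (hY : ∀ᵐ ω ∂ℙ, a ≤ Y ω ∧ Y ω ≤ b)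
    (hU : Measure.map U ℙ = volume.restrict (Set.Icc (0 : ℝ) 1))
    (hInd : IndepFun (fun ω => (X ω, Y ω)) U ℙ)
    (δ : ℝ) (Z : Ω → ℝ) (hZ : Z = fun ω => Y ω + δ) :
    ∫ ω in {ω | Y ω ≤ X ω ∧ X ω ≤ Z ω}, X ω ∂ℙ =
      δ * (ℙ {ω | Z ω ≥ X ω ∧ X ω ≥ Y ω + δ * U ω}).toReal
        + ∫ ω in {ω | Y ω ≤ X ω ∧ X ω ≤ Z ω}, Y ω ∂ℙ := by
  subst hZ
  set A : Set Ω := {ω | Y ω ≤ X ω ∧ X ω ≤ Y ω + δ} with hAdef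
  have hA : MeasurableSet A :=
    (measurableSet_le hYm hXm).inter (measurableSet_le hXm (hYm.add_const δ))
  rcases lt_trichotomy δ 0 with hδ | hδ | hδ
  · -- δ < 0 : both sides vanish
    have hAe : A = ∅ := by
      ext ω
      simp only [hAdef, Set.mem_setOf_eq, Set.mem_empty_iff_false, iff_false]
      rintro ⟨h1, h2⟩; linarith
    have hP : ℙ {ω | Y ω + δ ≥ X ω ∧ X ω ≥ Y ω + δ * U ω} = 0 := by
      have hsub : {ω | Y ω + δ ≥ X ω ∧ X ω ≥ Y ω + δ * U ω} ⊆ U ⁻¹' Set.Ici 1 := by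
        rintro ω ⟨h1, h2⟩
        simp only [Set.mem_preimage, Set.mem_Ici]
        nlinarith
      refine measure_mono_null hsub ?_
      have : ℙ (U ⁻¹' Set.Ici 1) = Measure.map U ℙ (Set.Ici 1) :=
        (Measure.map_apply hUm measurableSet_Ici).symm
      rw [this, hU, Measure.restrict_apply measurableSet_Ici]
      have : Set.Ici (1:ℝ) ∩ Set.Icc 0 1 = {1} := by
        ext x; simp only [Set.mem_inter_iff, Set.mem_Ici, Set.mem_Icc, Set.mem_singleton_iff]
        constructor
        · rintro ⟨h1, _, h2⟩; linarith
        · rintro rfl; norm_num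
      rw [this, Real.volume_singleton]
    rw [hP]
    simp [hAe]
  · -- δ = 0 : X = Y on A
    subst hδ
    have : ∫ ω in A, X ω ∂ℙ = ∫ ω in A, Y ω ∂ℙ := by
      refine setIntegral_congr_fun hA ?_
      rintro ω ⟨h1, h2⟩
      linarith [h2]
    rw [this]; ring
  · -- δ > 0 : main case
    set W : Ω → ℝ := fun ω => X ω - Y ω with hWdef
    have hWm : Measurable W := hXm.sub hYm
    -- integrability of X and Y
    have hXi : Integrable X ℙ := by
      refine (integrable_const c).mono' hXm.aestronglyMeasurable ?_
      filter_upwards [hX] with ω ⟨h0, h1⟩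
      rw [Real.norm_eq_abs, abs_of_nonneg h0]; exact h1
    have hYi : Integrable Y ℙ := by
      refine (integrable_const (max |a| |b|)).mono' hYm.aestronglyMeasurable ?_
      filter_upwards [hY] with ω ⟨h0, h1⟩
      rw [Real.norm_eq_abs]
      rcases abs_cases (Y ω) with ⟨he, _⟩ | ⟨he, _⟩
      · rw [he]; exact le_trans h1 (le_trans (le_abs_self b) (le_max_right _ _))
      · rw [he]
        exact le_trans (by linarith [neg_le_neg h0] : -Y ω ≤ -a)
          (le_trans (neg_le_abs a) (le_max_left _ _))
    -- rewrite goal as integral of W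
    rw [← sub_eq_iff_eq_add, ← integral_sub hXi.integrableOn hYi.integrableOn]
    -- A as preimage
    have hApre : A = W ⁻¹' Set.Icc 0 δ := by
      ext ω
      simp only [hAdef, hWdef, Set.mem_setOf_eq, Set.mem_preimage, Set.mem_Icc, sub_nonneg]
      constructor
      · rintro ⟨h1, h2⟩; exact ⟨h1, by linarith⟩
      · rintro ⟨h1, h2⟩; exact ⟨h1, by linarith⟩
    -- LHS of the new goal equals a lintegral
    have hWnn : 0 ≤ᵐ[(ℙ : Measure Ω).restrict A] fun ω => W ω := by
      refine (ae_restrict_iff' hA).2 (ae_of_all _ ?_)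
      rintro ω ⟨h1, _⟩
      simpa [hWdef, sub_nonneg] using h1
    have hL1 : ∫ ω in A, (X ω - Y ω) ∂ℙ
        = (∫⁻ ω in A, ENNReal.ofReal (W ω) ∂ℙ).toReal := by
      rw [integral_eq_lintegral_of_nonneg_ae hWnn
        (hWm.aestronglyMeasurable.restrict)]
    have hL2 : ∫⁻ ω in A, ENNReal.ofReal (W ω) ∂ℙ
        = ∫⁻ w in Set.Icc 0 δ, ENNReal.ofReal w ∂(Measure.map W ℙ) := by
      rw [setLIntegral_map measurableSet_Icc (by fun_prop) hWm, ← hApre]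
    -- the probability via independence
    have hWU : IndepFun W U ℙ := by
      have : W = (fun p : ℝ × ℝ => p.1 - p.2) ∘ (fun ω => (X ω, Y ω)) := rfl
      rw [this]
      exact hInd.comp (measurable_fst.sub measurable_snd) measurable_id
    have hmap : Measure.map (fun ω => (W ω, U ω)) ℙ
        = (Measure.map W ℙ).prod (Measure.map U ℙ) :=
      (indepFun_iff_map_prod_eq_prod_map_map hWm.aemeasurable hUm.aemeasurable).1 hWU
    set S : Set (ℝ × ℝ) := {p | p.1 ≤ δ ∧ δ * p.2 ≤ p.1} with hSdef
    have hS : MeasurableSet S :=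
      (measurableSet_le measurable_fst measurable_const).inter
        (measurableSet_le (measurable_const.mul measurable_snd) measurable_fst)
    have hEeq : {ω | Y ω + δ ≥ X ω ∧ X ω ≥ Y ω + δ * U ω}
        = (fun ω => (W ω, U ω)) ⁻¹' S := by
      ext ω
      simp only [hSdef, hWdef, Set.mem_setOf_eq, Set.mem_preimage, ge_iff_le]
      constructor
      · rintro ⟨h1, h2⟩; exact ⟨by linarith, by linarith⟩
      · rintro ⟨h1, h2⟩; exact ⟨by linarith, by linarith⟩
    have hPE : ℙ {ω | Y ω + δ ≥ X ω ∧ X ω ≥ Y ω + δ * U ω}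
        = ((Measure.map W ℙ).prod (Measure.map U ℙ)) S := by
      rw [hEeq, ← hmap, Measure.map_apply (hWm.prodMk hUm) hS]
    -- slice computation
    have hslice : ∀ w : ℝ, (Measure.map U ℙ) (Prod.mk w ⁻¹' S)
        = Set.indicator (Set.Iic δ) (fun w => ENNReal.ofReal (min (w / δ) 1)) w := by
      intro w
      rw [hU]
      by_cases hw : w ≤ δ
      · have hset : Prod.mk w ⁻¹' S = Set.Iic (w / δ) := by
          ext u
          simp only [hSdef, Set.mem_preimage, Set.mem_setOf_eq, Set.mem_Iic]
          constructor
          · rintro ⟨_, h2⟩; exact (le_div_iff₀' hδ).2 h2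
          · intro h; exact ⟨hw, (le_div_iff₀' hδ).1 h⟩
        rw [hset, Set.indicator_of_mem (Set.mem_Iic.2 hw),
          Measure.restrict_apply measurableSet_Iic]
        have : Set.Iic (w / δ) ∩ Set.Icc 0 1 = Set.Icc 0 (min (w / δ) 1) := by
          ext x
          simp only [Set.mem_inter_iff, Set.mem_Iic, Set.mem_Icc, le_min_iff]
          tauto
        rw [this, Real.volume_Icc, sub_zero]
      · have hset : Prod.mk w ⁻¹' S = ∅ := by
          ext u
          simp only [hSdef, Set.mem_preimage, Set.mem_setOf_eq, Set.mem_empty_iff_false,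
            iff_false]
          rintro ⟨h1, _⟩; exact hw h1
        rw [hset, Set.indicator_of_notMem (by simpa using hw), measure_empty]
    -- combine
    have hprod : ((Measure.map W ℙ).prod (Measure.map U ℙ)) S
        = ∫⁻ w, Set.indicator (Set.Iic δ) (fun w => ENNReal.ofReal (min (w / δ) 1)) w
            ∂(Measure.map W ℙ) := by
      rw [Measure.prod_apply hS]
      exact lintegral_congr fun w => hslice w
    have hkey : ENNReal.ofReal δ * ((Measure.map W ℙ).prod (Measure.map U ℙ)) S
        = ∫⁻ w in Set.Icc 0 δ, ENNReal.ofReal w ∂(Measure.map W ℙ) := by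
      rw [hprod, ← lintegral_const_mul _ (by
        exact (Measurable.indicator (by fun_prop) measurableSet_Iic))]
      rw [← lintegral_indicator measurableSet_Icc]
      refine lintegral_congr fun w => ?_
      by_cases hw : w ≤ δ
      · rw [Set.indicator_of_mem (Set.mem_Iic.2 hw)]
        by_cases hw0 : 0 ≤ w
        · rw [Set.indicator_of_mem (Set.mem_Icc.2 ⟨hw0, hw⟩)]
          have h1 : w / δ ≤ 1 := (div_le_one hδ).2 hw
          rw [min_eq_left h1, ← ENNReal.ofReal_mul hδ.le, mul_div_cancel₀ _ (ne_of_gt hδ)]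
        · rw [Set.indicator_of_notMem (by simp [Set.mem_Icc]; intro h; linarith)]
          have h1 : w / δ < 0 := div_neg_of_neg_of_pos (by linarith) hδ
          rw [min_eq_left (by linarith : w / δ ≤ 1), ENNReal.ofReal_of_nonpos h1.le, mul_zero]
      · rw [Set.indicator_of_notMem (by simpa using hw),
          Set.indicator_of_notMem (by simp [Set.mem_Icc]; intro h; linarith), mul_zero]
    -- finite
    have hfin : ((Measure.map W ℙ).prod (Measure.map U ℙ)) S ≠ ⊤ := by
      have h1 : IsProbabilityMeasure (Measure.map W ℙ) := Measure.isProbabilityMeasure_map hWm.aemeasurable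
      have h2 : IsProbabilityMeasure (Measure.map U ℙ) := Measure.isProbabilityMeasure_map hUm.aemeasurable
      exact (measure_lt_top _ _).ne
    rw [hL1, hL2, hPE, ← hkey, ENNReal.toReal_mul, ENNReal.toReal_ofReal hδ.le]
end

section
/- Let X be a random variable with 0 ≤ X ≤ c almost surely, let Y be a random variable with a ≤ Y ≤ b almost surely, let δ > 0 be a real number, and let U be a random variable uniformly distributed on [0,1] that is independent of the pair (X, Y). Then δ·P(Y + δ ≥ X ≥ Y + δ·U) = E[(X − Y)·1{Y ≤ X ≤ Y + δ}]. -/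
open MeasureTheory ProbabilityTheory

/-- The case `δ > 0` in the proof of Lemma 1:
`δ·P(Y + δ ≥ X ≥ Y + δU) = E[(X − Y)·1{Y ≤ X ≤ Y + δ}]`. -/
theorem delta_pos_identity
    {Ω : Type*} [MeasureSpace Ω] [IsProbabilityMeasure (ℙ : Measure Ω)]
    {c a b : ℝ} {X Y U : Ω → ℝ}
    (hXm : Measurable X) (hYm : Measurable Y) (hUm : Measurable U)
    (hX : ∀ᵐ ω ∂ℙ, 0 ≤ X ω ∧ X ω ≤ c)
    (hY : ∀ᵐ ω ∂ℙ, a ≤ Y ω ∧ Y ω ≤ b)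
    {δ : ℝ} (hδ : 0 < δ)
    (hU : Measure.map U ℙ = volume.restrict (Set.Icc (0 : ℝ) 1))
    (hInd : IndepFun (fun ω => (X ω, Y ω)) U ℙ) :
    δ * (ℙ {ω | Y ω + δ ≥ X ω ∧ X ω ≥ Y ω + δ * U ω}).toReal =
      ∫ ω in {ω | Y ω ≤ X ω ∧ X ω ≤ Y ω + δ}, (X ω - Y ω) ∂ℙ := by
  set Z : Ω → ℝ := fun ω => X ω - Y ω with hZdef
  have hZm : Measurable Z := hXm.sub hYm
  set μZ : Measure ℝ := Measure.map Z ℙ with hμZ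
  -- independence of Z and U
  have hIndZ : IndepFun Z U ℙ := by
    have := hInd.comp (φ := fun p : ℝ × ℝ => p.1 - p.2) (ψ := id)
      (measurable_fst.sub measurable_snd) measurable_id
    exact this
  have hmap : Measure.map (fun ω => (Z ω, U ω)) ℙ = μZ.prod (Measure.map U ℙ) :=
    (indepFun_iff_map_prod_eq_prod_map_map hZm.aemeasurable hUm.aemeasurable).mp hIndZ
  -- the event as a preimage
  have hA : MeasurableSet {p : ℝ × ℝ | p.1 ≤ δ ∧ δ * p.2 ≤ p.1} :=
    (measurableSet_le measurable_fst measurable_const).inter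
      (measurableSet_le (measurable_const.mul measurable_snd) measurable_fst)
  have hEv : {ω | Y ω + δ ≥ X ω ∧ X ω ≥ Y ω + δ * U ω}
      = (fun ω => (Z ω, U ω)) ⁻¹' {p : ℝ × ℝ | p.1 ≤ δ ∧ δ * p.2 ≤ p.1} := by
    ext ω
    simp only [Set.mem_setOf_eq, Set.mem_preimage, hZdef]
    constructor <;> rintro ⟨h1, h2⟩ <;> constructor <;> linarith
  -- the section measure
  have hsec : ∀ z : ℝ, (Measure.map U ℙ) {u | z ≤ δ ∧ δ * u ≤ z}
      = (Set.Iic δ).indicator (fun z => ENNReal.ofReal (z / δ)) z := by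
    intro z
    rw [hU]
    by_cases hzδ : z ≤ δ
    · have hset : {u : ℝ | z ≤ δ ∧ δ * u ≤ z} = Set.Iic (z / δ) := by
        ext u
        simp only [Set.mem_setOf_eq, Set.mem_Iic, hzδ, true_and]
        rw [le_div_iff₀ hδ, mul_comm]
      rw [hset, Set.indicator_of_mem (Set.mem_Iic.mpr hzδ), Measure.restrict_apply measurableSet_Iic]
      have : Set.Iic (z / δ) ∩ Set.Icc (0:ℝ) 1 = Set.Icc 0 (z / δ) := by
        ext u
        simp only [Set.mem_inter_iff, Set.mem_Iic, Set.mem_Icc]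
        have hzd1 : z / δ ≤ 1 := (div_le_one hδ).mpr hzδ
        constructor
        · rintro ⟨h1, h2, h3⟩; exact ⟨h2, h1⟩
        · rintro ⟨h1, h2⟩; exact ⟨h2, h1, h2.trans hzd1⟩
      rw [this, Real.volume_Icc, sub_zero]
    · have hset : {u : ℝ | z ≤ δ ∧ δ * u ≤ z} = ∅ := by
        ext u; simp [hzδ]
      rw [hset, Set.indicator_of_notMem (by simpa using hzδ)]
      simp
  -- compute the probability of the event
  have hprob : ℙ {ω | Y ω + δ ≥ X ω ∧ X ω ≥ Y ω + δ * U ω}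
      = ∫⁻ z, (Set.Iic δ).indicator (fun z => ENNReal.ofReal (z / δ)) z ∂μZ := by
    rw [hEv, ← Measure.map_apply (hZm.prodMk hUm) hA, hmap,
      Measure.prod_apply hA]
    refine lintegral_congr fun z => ?_
    rw [← hsec z]
    rfl
  -- key pointwise identity after multiplying by δ
  have hkey : (fun z => ENNReal.ofReal δ * (Set.Iic δ).indicator
        (fun z => ENNReal.ofReal (z / δ)) z)
      = fun z => (Set.Icc (0:ℝ) δ).indicator (fun z => ENNReal.ofReal z) z := by
    ext z
    by_cases h0 : 0 ≤ z
    · by_cases h1 : z ≤ δ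
      · rw [Set.indicator_of_mem (Set.mem_Iic.mpr h1),
          Set.indicator_of_mem (Set.mem_Icc.mpr ⟨h0, h1⟩),
          ← ENNReal.ofReal_mul hδ.le, mul_div_cancel₀ _ hδ.ne']
      · rw [Set.indicator_of_notMem (by simpa using h1),
          Set.indicator_of_notMem (by simp [Set.mem_Icc, h1]), mul_zero]
    · have h1 : z ≤ δ := le_of_lt ((lt_of_not_ge h0).trans hδ)
      rw [Set.indicator_of_mem (Set.mem_Iic.mpr h1),
        Set.indicator_of_notMem (by simp [Set.mem_Icc, h0]),
        ENNReal.ofReal_of_nonpos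
          (div_nonpos_of_nonpos_of_nonneg (le_of_not_ge h0) hδ.le), mul_zero]
  -- the RHS set as preimage
  have hS : {ω | Y ω ≤ X ω ∧ X ω ≤ Y ω + δ} = Z ⁻¹' Set.Icc 0 δ := by
    ext ω
    simp only [Set.mem_setOf_eq, Set.mem_preimage, Set.mem_Icc, hZdef]
    constructor <;> rintro ⟨h1, h2⟩ <;> constructor <;> linarith
  -- RHS as a lintegral
  have hRHS : ∫ ω in {ω | Y ω ≤ X ω ∧ X ω ≤ Y ω + δ}, (X ω - Y ω) ∂ℙ
      = (∫⁻ z, (Set.Icc (0:ℝ) δ).indicator (fun z => ENNReal.ofReal z) z ∂μZ).toReal := by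
    rw [hS]
    have hnn : 0 ≤ᵐ[Measure.restrict ℙ (Z ⁻¹' Set.Icc (0:ℝ) δ)] fun ω => X ω - Y ω := by
      filter_upwards [ae_restrict_mem (hZm measurableSet_Icc)] with ω hω
      exact hω.1
    rw [integral_eq_lintegral_of_nonneg_ae hnn
      (hXm.sub hYm).aestronglyMeasurable.restrict]
    congr 1
    have hmap2 : ∫⁻ z in Set.Icc (0:ℝ) δ, ENNReal.ofReal z ∂(Measure.map Z ℙ)
        = ∫⁻ a in Z ⁻¹' Set.Icc (0:ℝ) δ, ENNReal.ofReal (Z a) ∂ℙ :=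
      setLIntegral_map (μ := ℙ) (g := Z) (f := fun z => ENNReal.ofReal z)
        measurableSet_Icc ENNReal.measurable_ofReal hZm
    calc ∫⁻ a in Z ⁻¹' Set.Icc 0 δ, ENNReal.ofReal (X a - Y a) ∂ℙ
        = ∫⁻ z in Set.Icc (0:ℝ) δ, ENNReal.ofReal z ∂μZ := by rw [hμZ, hmap2]
      _ = ∫⁻ z, (Set.Icc (0:ℝ) δ).indicator (fun z => ENNReal.ofReal z) z ∂μZ := by
          rw [lintegral_indicator measurableSet_Icc]
  -- put everything together
  have hmain : ENNReal.ofReal δ * ℙ {ω | Y ω + δ ≥ X ω ∧ X ω ≥ Y ω + δ * U ω}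
      = ∫⁻ z, (Set.Icc (0:ℝ) δ).indicator (fun z => ENNReal.ofReal z) z ∂μZ := by
    have hmeas : Measurable fun z : ℝ =>
        (Set.Iic δ).indicator (fun z => ENNReal.ofReal (z / δ)) z :=
      Measurable.indicator (ENNReal.measurable_ofReal.comp
        (measurable_id.div_const δ)) measurableSet_Iic
    rw [hprob]
    calc ENNReal.ofReal δ *
          ∫⁻ z, (Set.Iic δ).indicator (fun z => ENNReal.ofReal (z / δ)) z ∂μZ
        = ∫⁻ z, ENNReal.ofReal δ *
            (Set.Iic δ).indicator (fun z => ENNReal.ofReal (z / δ)) z ∂μZ :=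
          (lintegral_const_mul _ hmeas).symm
      _ = ∫⁻ z, (Set.Icc (0:ℝ) δ).indicator (fun z => ENNReal.ofReal z) z ∂μZ :=
          lintegral_congr fun z => congrFun hkey z
  rw [hRHS, ← hmain, ENNReal.toReal_mul, ENNReal.toReal_ofReal hδ.le]
end

section
/- Let X be a random variable with 0 ≤ X ≤ c almost surely, let Y be a random variable with a ≤ Y ≤ b almost surely, let δ be a real number with c − a − δ > 0, and let U be a random variable uniformly distributed on [0,1] that is independent of the pair (X, Y). Then (c − a − δ)·P(X > Y + δ + (c − a − δ)·U) = E[(X − Y − δ)·1{X > Y + δ}]. -/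
open MeasureTheory ProbabilityTheory

/-- The case `c − a − δ > 0` in the proof of Lemma 2:
`(c − a − δ)·P(X > Y + δ + (c − a − δ)·U) = E[(X − Y − δ)·1{X > Y + δ}]`. -/
theorem c_sub_v_pos_identity
    {Ω : Type*} [MeasureSpace Ω] [IsProbabilityMeasure (ℙ : Measure Ω)]
    {c a b : ℝ} {X Y U : Ω → ℝ}
    (hXm : Measurable X) (hYm : Measurable Y) (hUm : Measurable U)
    (hX : ∀ᵐ ω ∂ℙ, 0 ≤ X ω ∧ X ω ≤ c)
    (hY : ∀ᵐ ω ∂ℙ, a ≤ Y ω ∧ Y ω ≤ b)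
    {δ : ℝ} (hδ : 0 < c - a - δ)
    (hU : Measure.map U ℙ = volume.restrict (Set.Icc (0 : ℝ) 1))
    (hInd : IndepFun (fun ω => (X ω, Y ω)) U ℙ) :
    (c - a - δ) * (ℙ {ω | X ω > Y ω + δ + (c - a - δ) * U ω}).toReal =
      ∫ ω in {ω | X ω > Y ω + δ}, (X ω - Y ω - δ) ∂ℙ := by
  set v := c - a - δ with hv
  have hgm : Measurable fun ω => X ω - Y ω - δ := (hXm.sub hYm).sub measurable_const
  set μ := Measure.map (fun ω => (X ω, Y ω)) ℙ with hμ
  have hpairm : Measurable fun ω => (X ω, Y ω) := hXm.prodMk hYm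
  have hS : MeasurableSet {p : (ℝ × ℝ) × ℝ | p.1.1 > p.1.2 + δ + v * p.2} := by
    have h1 : Measurable fun p : (ℝ × ℝ) × ℝ => p.1.2 + δ + v * p.2 :=
      (measurable_fst.snd.add measurable_const).add (measurable_snd.const_mul v)
    exact measurableSet_lt h1 measurable_fst.fst
  have hS' : MeasurableSet {p : (ℝ × ℝ) × ℝ | p.1.2 + δ + v * p.2 < p.1.1} := hS
  have hmap : Measure.map (fun ω => ((X ω, Y ω), U ω)) ℙ
      = μ.prod (Measure.map U ℙ) :=
    (indepFun_iff_map_prod_eq_prod_map_map hpairm.aemeasurable hUm.aemeasurable).mp hInd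
  have hPE : ℙ {ω | X ω > Y ω + δ + v * U ω} =
      (μ.prod (volume.restrict (Set.Icc (0:ℝ) 1))) {p : (ℝ×ℝ)×ℝ | p.1.1 > p.1.2 + δ + v * p.2} := by
    rw [← hU, ← hmap, Measure.map_apply (hpairm.prodMk hUm) hS]
    rfl
  have hνIio : ∀ t : ℝ, t ≤ 1 →
      (volume.restrict (Set.Icc (0:ℝ) 1)) (Set.Iio t) = ENNReal.ofReal t := by
    intro t ht
    rw [Measure.restrict_apply measurableSet_Iio]
    have heq : Set.Iio t ∩ Set.Icc (0:ℝ) 1 = Set.Ico 0 t := by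
      ext u
      simp only [Set.mem_inter_iff, Set.mem_Iio, Set.mem_Icc, Set.mem_Ico]
      constructor
      · rintro ⟨h1, h2, h3⟩; exact ⟨h2, h1⟩
      · rintro ⟨h1, h2⟩; exact ⟨h2, h1, le_trans h2.le ht⟩
    rw [heq, Real.volume_Ico, sub_zero]
  have hmset : MeasurableSet {q : ℝ × ℝ | q.1 ≤ c ∧ a ≤ q.2} :=
    (measurableSet_le measurable_fst measurable_const).inter
      (measurableSet_le measurable_const measurable_snd)
  have hae : ∀ᵐ p ∂μ, p ∈ {q : ℝ × ℝ | q.1 ≤ c ∧ a ≤ q.2} := by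
    rw [hμ]
    refine (ae_map_iff hpairm.aemeasurable hmset).mpr ?_
    filter_upwards [hX, hY] with ω hx hy
    exact ⟨hx.2, hy.1⟩
  have hofm : Measurable fun p : ℝ × ℝ => ENNReal.ofReal (p.1 - p.2 - δ) :=
    ((measurable_fst.sub measurable_snd).sub measurable_const).ennreal_ofReal
  have key : ENNReal.ofReal v * ℙ {ω | X ω > Y ω + δ + v * U ω}
      = ∫⁻ ω, ENNReal.ofReal (X ω - Y ω - δ) ∂ℙ := by
    rw [hPE, Measure.prod_apply hS,
      ← lintegral_const_mul' _ _ ENNReal.ofReal_ne_top,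
      ← lintegral_map hofm hpairm]
    refine lintegral_congr_ae ?_
    filter_upwards [hae] with p hp
    have hslice : (Prod.mk p ⁻¹' {q : (ℝ×ℝ)×ℝ | q.1.1 > q.1.2 + δ + v * q.2})
        = Set.Iio ((p.1 - p.2 - δ) / v) := by
      ext u
      simp only [Set.mem_preimage, Set.mem_setOf_eq, Set.mem_Iio, gt_iff_lt,
        lt_div_iff₀ hδ]
      constructor <;> intro h <;> nlinarith
    rw [hslice, hνIio _ (by rw [div_le_one hδ]; have := hp.1; have := hp.2; simp only [hv]; linarith),
      ← ENNReal.ofReal_mul hδ.le]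
    have : v * ((p.1 - p.2 - δ) / v) = p.1 - p.2 - δ := by field_simp
    rw [this]
  have hA : MeasurableSet {ω | X ω > Y ω + δ} :=
    measurableSet_lt (hYm.add measurable_const) hXm
  have hRHS : ∫ ω in {ω | X ω > Y ω + δ}, (X ω - Y ω - δ) ∂ℙ
      = (∫⁻ ω, ENNReal.ofReal (X ω - Y ω - δ) ∂ℙ).toReal := by
    rw [integral_eq_lintegral_of_nonneg_ae ?pos (hgm.aestronglyMeasurable.restrict)]
    case pos =>
      filter_upwards [ae_restrict_mem hA] with ω hω
      simp only [Set.mem_setOf_eq, gt_iff_lt] at hω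
      simp only [Pi.zero_apply]
      linarith
    congr 1
    rw [← lintegral_indicator hA]
    refine lintegral_congr fun ω => ?_
    by_cases h : ω ∈ {ω | X ω > Y ω + δ}
    · rw [Set.indicator_of_mem h]
    · rw [Set.indicator_of_notMem h]
      simp only [Set.mem_setOf_eq, gt_iff_lt, not_lt] at h
      rw [ENNReal.ofReal_eq_zero.mpr (by linarith)]
  calc v * (ℙ {ω | X ω > Y ω + δ + v * U ω}).toReal
      = (ENNReal.ofReal v * ℙ {ω | X ω > Y ω + δ + v * U ω}).toReal := by
        rw [ENNReal.toReal_mul, ENNReal.toReal_ofReal hδ.le]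
    _ = _ := by rw [key, hRHS]
end

section
/- Let X be a random variable with 0 ≤ X ≤ c almost surely, let Y be a random variable with a ≤ Y ≤ b almost surely, let δ be a real number, and let (X₁, Y₁, U₁), …, (Xₙ, Yₙ, Uₙ) be i.i.d. tuples such that each Xᵢ has the distribution of X, each Yᵢ has the distribution of Y, each Uᵢ is uniformly distributed on [0,1], and Uᵢ is independent of the pair (Xᵢ, Yᵢ). Define Kₐ = Σᵢ 1{Xᵢ ≥ Yᵢ + δ·Uᵢ}, K_b = Σᵢ 1{Xᵢ > Yᵢ + δ + |c − a − δ|·Uᵢ}, and K_c = Σᵢ 1{Xᵢ < b·Uᵢ < Yᵢ}. Then the estimator E[Y] + δ·Kₐ/n + |c − a − δ|·K_b/n − b·K_c/n is an unbiased estimator of E[X]; that is, its expectation equals E[X]. -/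
open MeasureTheory ProbabilityTheory

section AuxLemmas
open Set

lemma vol_Iic_inter (t : ℝ) :
    (volume (Iic t ∩ Icc (0:ℝ) 1)).toReal = max 0 (min 1 t) := by
  have h : Iic t ∩ Icc (0:ℝ) 1 = Icc 0 (min t 1) := by
    ext u
    simp only [mem_inter_iff, mem_Iic, mem_Icc, le_min_iff]
    tauto
  rw [h, Real.volume_Icc, ENNReal.toReal_ofReal', sub_zero, min_comm, max_comm]

lemma vol_Iio_inter (t : ℝ) :
    (volume (Iio t ∩ Icc (0:ℝ) 1)).toReal = max 0 (min 1 t) := by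
  have h : volume (Iio t ∩ Icc (0:ℝ) 1) = volume (Iic t ∩ Icc (0:ℝ) 1) :=
    measure_congr (ae_eq_set_inter Iio_ae_eq_Iic (Filter.EventuallyEq.refl _ _))
  rw [h, vol_Iic_inter]

lemma vol_Ici_inter (t : ℝ) :
    (volume (Ici t ∩ Icc (0:ℝ) 1)).toReal = max 0 (min 1 (1 - t)) := by
  have h : Ici t ∩ Icc (0:ℝ) 1 = Icc (max t 0) 1 := by
    ext u
    simp only [mem_inter_iff, mem_Ici, mem_Icc, max_le_iff]
    tauto
  rw [h, Real.volume_Icc, ENNReal.toReal_ofReal']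
  have h2 : 1 - max t 0 = min 1 (1 - t) := by
    rcases le_total t 0 with h1 | h1
    · rw [max_eq_right h1, min_eq_left (by linarith), sub_zero]
    · rw [max_eq_left h1, min_eq_right (by linarith)]
  rw [h2, max_comm]

lemma mul_clamp_pos {δ : ℝ} (hδ : 0 < δ) (t : ℝ) :
    δ * max 0 (min 1 (t / δ)) = max 0 (min δ t) := by
  rcases le_total t 0 with h | h
  · have ht : t / δ ≤ 0 := div_nonpos_iff.mpr (Or.inr ⟨h, hδ.le⟩)
    rw [min_eq_right (ht.trans zero_le_one), max_eq_left ht, mul_zero,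
      min_eq_right (h.trans hδ.le), max_eq_left h]
  · rcases le_total t δ with h2 | h2
    · have h3 : t / δ ≤ 1 := (div_le_one hδ).mpr h2
      have h4 : 0 ≤ t / δ := div_nonneg h hδ.le
      rw [min_eq_right h3, max_eq_right h4, mul_div_cancel₀ _ hδ.ne',
        min_eq_right h2, max_eq_right h]
    · have h3 : 1 ≤ t / δ := (one_le_div hδ).mpr h2
      rw [min_eq_left h3, max_eq_right zero_le_one, mul_one,
        min_eq_left h2, max_eq_right hδ.le]

lemma mul_clamp_neg {δ : ℝ} (hδ : δ < 0) (t : ℝ) :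
    δ * max 0 (min 1 (1 - t / δ)) = min 0 (max δ (δ - t)) := by
  have hδ' : 0 < -δ := neg_pos.mpr hδ
  have hdiv : t / δ = (-t) / (-δ) := (neg_div_neg_eq t δ).symm
  rcases le_total t δ with h | h
  · -- t ≤ δ < 0 : t/δ ≥ 1
    have h3 : 1 ≤ t / δ := by
      rw [hdiv]; exact (one_le_div hδ').mpr (by linarith)
    rw [min_eq_right (by linarith), max_eq_left (by linarith), mul_zero,
      max_eq_right (by linarith), min_eq_left (by linarith)]
  · rcases le_total t 0 with h2 | h2
    · -- δ ≤ t ≤ 0 : t/δ ∈ [0,1]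
      have h3 : t / δ ≤ 1 := by
        rw [hdiv]; exact (div_le_one hδ').mpr (by linarith)
      have h4 : 0 ≤ t / δ := by
        rw [hdiv]; exact div_nonneg (by linarith) hδ'.le
      rw [min_eq_right (by linarith), max_eq_right (by linarith), mul_sub, mul_one,
        mul_div_cancel₀ _ hδ.ne, max_eq_right (by linarith), min_eq_right (by linarith)]
    · -- 0 ≤ t : t/δ ≤ 0
      have h3 : t / δ ≤ 0 := by
        rw [hdiv]; exact div_nonpos_iff.mpr (Or.inr ⟨by linarith, by linarith⟩)
      rw [min_eq_left (by linarith), max_eq_right zero_le_one, mul_one,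
        max_eq_left (by linarith), min_eq_right hδ.le]

lemma core_identity (c a b δ x y : ℝ) (hx0 : 0 ≤ x) (hxc : x ≤ c)
    (hya : a ≤ y) (hyb : y ≤ b) :
    y + δ * (volume ({u : ℝ | x ≥ y + δ * u} ∩ Icc 0 1)).toReal
      + |c - a - δ| * (volume ({u : ℝ | x > y + δ + |c - a - δ| * u} ∩ Icc 0 1)).toReal
      - b * (volume ({u : ℝ | x < b * u ∧ b * u < y} ∩ Icc 0 1)).toReal = x := by
  -- term 3
  have h3 : b * (volume ({u : ℝ | x < b * u ∧ b * u < y} ∩ Icc 0 1)).toReal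
      = max 0 (y - x) := by
    rcases lt_or_ge 0 b with hb | hb
    · have hset : {u : ℝ | x < b * u ∧ b * u < y} ∩ Icc 0 1 = Ioo (x / b) (y / b) := by
        ext u
        simp only [mem_inter_iff, mem_setOf_eq, mem_Icc, mem_Ioo,
          div_lt_iff₀ hb, lt_div_iff₀ hb]
        constructor
        · rintro ⟨⟨h1, h2⟩, _, _⟩
          constructor <;> nlinarith
        · rintro ⟨h1, h2⟩
          have hu0 : 0 ≤ u := by nlinarith
          have hu1 : u ≤ 1 := by nlinarith
          refine ⟨⟨by nlinarith, by nlinarith⟩, hu0, hu1⟩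
      rw [hset, Real.volume_Ioo, ENNReal.toReal_ofReal', mul_max_of_nonneg _ _ hb.le,
        mul_zero, mul_sub, mul_div_cancel₀ _ hb.ne', mul_div_cancel₀ _ hb.ne', max_comm]
    · have hset : {u : ℝ | x < b * u ∧ b * u < y} ∩ Icc 0 1 = ∅ := by
        rw [eq_empty_iff_forall_notMem]
        rintro u ⟨⟨h1, h2⟩, hu0, hu1⟩
        nlinarith
      rw [hset, measure_empty, ENNReal.toReal_zero, mul_zero,
        max_eq_left (by linarith)]
  -- term 2
  have h2 : |c - a - δ| * (volume ({u : ℝ | x > y + δ + |c - a - δ| * u} ∩ Icc 0 1)).toReal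
      = max 0 (x - y - δ) := by
    have hm0 : (0:ℝ) ≤ |c - a - δ| := abs_nonneg _
    have hzm : x - y - δ ≤ |c - a - δ| := le_trans (by linarith) (le_abs_self _)
    rcases eq_or_lt_of_le hm0 with hm | hm
    · rw [← hm, zero_mul, max_eq_left (by linarith)]
    · have hset : {u : ℝ | x > y + δ + |c - a - δ| * u} = Iio ((x - y - δ) / |c - a - δ|) := by
        ext u
        simp only [mem_setOf_eq, mem_Iio, lt_div_iff₀ hm]
        constructor <;> intro h <;> nlinarith
      rw [hset, vol_Iio_inter, mul_clamp_pos hm, min_eq_right hzm]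
  rw [h2, h3]
  -- term 1 and conclusion
  rcases lt_trichotomy δ 0 with hδ | hδ | hδ
  · have hset : {u : ℝ | x ≥ y + δ * u} = Ici ((x - y) / δ) := by
      ext u
      simp only [mem_setOf_eq, mem_Ici, div_le_iff_of_neg hδ]
      constructor <;> intro h <;> nlinarith
    rw [hset, vol_Ici_inter, mul_clamp_neg hδ]
    rcases le_total (x - y) δ with h | h
    · rw [max_eq_right (show δ ≤ δ - (x - y) by linarith),
        min_eq_left (show (0:ℝ) ≤ δ - (x - y) by linarith),
        max_eq_left (show x - y - δ ≤ 0 by linarith),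
        max_eq_right (show (0:ℝ) ≤ y - x by linarith)]
      ring
    · rcases le_total (x - y) 0 with h4 | h4
      · rw [max_eq_right (show δ ≤ δ - (x - y) by linarith),
          min_eq_right (show δ - (x - y) ≤ 0 by linarith),
          max_eq_right (show (0:ℝ) ≤ x - y - δ by linarith),
          max_eq_right (show (0:ℝ) ≤ y - x by linarith)]
        ring
      · rw [max_eq_left (show δ - (x - y) ≤ δ by linarith),
          min_eq_right hδ.le,
          max_eq_right (show (0:ℝ) ≤ x - y - δ by linarith),
          max_eq_left (show y - x ≤ 0 by linarith)]
        ring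
  · subst hδ
    simp only [zero_mul, add_zero, mul_zero]
    rcases le_total (x - y) 0 with h | h
    · rw [max_eq_left (by linarith), max_eq_right (by linarith)]
      ring
    · rw [max_eq_right (by linarith), max_eq_left (by linarith)]
      ring
  · have hset : {u : ℝ | x ≥ y + δ * u} = Iic ((x - y) / δ) := by
      ext u
      simp only [mem_setOf_eq, mem_Iic, le_div_iff₀ hδ]
      constructor <;> intro h <;> nlinarith
    rw [hset, vol_Iic_inter, mul_clamp_pos hδ]
    rcases le_total (x - y) 0 with h | h
    · rw [min_eq_right (by linarith), max_eq_left h,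
        max_eq_left (by linarith), max_eq_right (by linarith)]
      ring
    · rcases le_total (x - y) δ with h4 | h4
      · rw [min_eq_right h4, max_eq_right h,
          max_eq_left (by linarith), max_eq_left (by linarith)]
        ring
      · rw [min_eq_left h4, max_eq_right hδ.le,
          max_eq_right (by linarith), max_eq_left (by linarith)]
        ring

end AuxLemmas

/-- The estimator `E[Y] + δ·Kₐ/n + |c − a − δ|·K_b/n − b·K_c/n` built from `n` i.i.d.
copies `(Xᵢ, Yᵢ, Uᵢ)` of `(X, Y, U)` is an unbiased estimator of `E[X]`. -/
theorem unbiased_estimator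
    {Ω : Type*} [MeasureSpace Ω] [IsProbabilityMeasure (ℙ : Measure Ω)]
    {c a b : ℝ} {X Y U : Ω → ℝ}
    (hXm : Measurable X) (hYm : Measurable Y) (hUm : Measurable U)
    (hX : ∀ᵐ ω ∂ℙ, 0 ≤ X ω ∧ X ω ≤ c)
    (hY : ∀ᵐ ω ∂ℙ, a ≤ Y ω ∧ Y ω ≤ b)
    (hU : Measure.map U ℙ = volume.restrict (Set.Icc (0 : ℝ) 1))
    (hInd : IndepFun (fun ω => (X ω, Y ω)) U ℙ)
    (δ : ℝ) {n : ℕ} (hn : 0 < n)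
    (Xs Ys Us : Fin n → Ω → ℝ)
    (hm : ∀ i, Measurable (Xs i) ∧ Measurable (Ys i) ∧ Measurable (Us i))
    (hid : ∀ i, IdentDistrib (fun ω => (Xs i ω, Ys i ω, Us i ω))
        (fun ω => (X ω, Y ω, U ω)) ℙ ℙ)
    (hiid : iIndepFun
        (fun i ω => (Xs i ω, Ys i ω, Us i ω)) ℙ) :
    ∫ ω, ((∫ ω', Y ω' ∂ℙ)
        + δ * ((∑ i, if Xs i ω ≥ Ys i ω + δ * Us i ω then (1 : ℝ) else 0) / n)
        + |c - a - δ| *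
            ((∑ i, if Xs i ω > Ys i ω + δ + |c - a - δ| * Us i ω then (1 : ℝ) else 0) / n)
        - b * ((∑ i, if Xs i ω < b * Us i ω ∧ b * Us i ω < Ys i ω then (1 : ℝ) else 0) / n))
        ∂ℙ =
      ∫ ω, X ω ∂ℙ := by
  classical
  have hn' : (n : ℝ) ≠ 0 := Nat.cast_ne_zero.mpr hn.ne'
  have hWm : Measurable (fun ω => (X ω, Y ω)) := hXm.prodMk hYm
  set μ : Measure (ℝ × ℝ) := Measure.map (fun ω => (X ω, Y ω)) ℙ with hμdef
  set ν : Measure ℝ := volume.restrict (Set.Icc (0:ℝ) 1) with hνdef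
  haveI hνP : IsProbabilityMeasure ν := ⟨by
    rw [hνdef, Measure.restrict_apply MeasurableSet.univ, Set.univ_inter, Real.volume_Icc]
    norm_num⟩
  haveI hμP : IsProbabilityMeasure μ := Measure.isProbabilityMeasure_map hWm.aemeasurable
  have hprod : Measure.map (fun ω => ((X ω, Y ω), U ω)) ℙ = μ.prod ν := by
    rw [hμdef, ← hU]
    exact (indepFun_iff_map_prod_eq_prod_map_map hWm.aemeasurable hUm.aemeasurable).mp hInd
  -- key : expectation of an indicator of ((X,Y),U) as a μ-integral of ν-sections
  have key : ∀ S : Set ((ℝ × ℝ) × ℝ), MeasurableSet S →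
      ((∫ ω, (if ((X ω, Y ω), U ω) ∈ S then (1:ℝ) else 0) ∂ℙ)
        = ∫ p, (ν (Prod.mk p ⁻¹' S)).toReal ∂μ)
      ∧ Integrable (fun p => (ν (Prod.mk p ⁻¹' S)).toReal) μ := by
    intro S hS
    have hind : (fun q : (ℝ × ℝ) × ℝ => if q ∈ S then (1:ℝ) else 0)
        = S.indicator (fun _ => (1:ℝ)) := by
      funext q; simp [Set.indicator_apply]
    have hmeas : Measurable (S.indicator (fun _ => (1:ℝ))) :=
      measurable_const.indicator hS
    have hint : Integrable (S.indicator (fun _ => (1:ℝ))) (μ.prod ν) :=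
      (integrable_const (1:ℝ)).indicator hS
    have hsec : ∀ p : ℝ × ℝ, (∫ u, S.indicator (fun _ => (1:ℝ)) (p, u) ∂ν)
        = (ν (Prod.mk p ⁻¹' S)).toReal := by
      intro p
      have h1 : (fun u => S.indicator (fun _ => (1:ℝ)) (p, u))
          = (Prod.mk p ⁻¹' S).indicator (fun _ => (1:ℝ)) := by
        funext u
        simp only [Set.indicator_apply, Set.mem_preimage]
      rw [h1, integral_indicator_const (1:ℝ) (measurable_prodMk_left hS)]
      simp [measureReal_def]
    constructor
    · calc ∫ ω, (if ((X ω, Y ω), U ω) ∈ S then (1:ℝ) else 0) ∂ℙ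
          = ∫ q, S.indicator (fun _ => (1:ℝ)) q ∂(Measure.map (fun ω => ((X ω, Y ω), U ω)) ℙ) := by
            rw [integral_map (hWm.prodMk hUm).aemeasurable hmeas.aestronglyMeasurable]
            simp [Set.indicator_apply]
        _ = ∫ q, S.indicator (fun _ => (1:ℝ)) q ∂(μ.prod ν) := by rw [hprod]
        _ = ∫ p, ∫ u, S.indicator (fun _ => (1:ℝ)) (p, u) ∂ν ∂μ := integral_prod _ hint
        _ = ∫ p, (ν (Prod.mk p ⁻¹' S)).toReal ∂μ :=
            integral_congr_ae (Filter.Eventually.of_forall fun p => hsec p)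
    · exact hint.integral_prod_left.congr
        (Filter.Eventually.of_forall fun p => hsec p)
  -- reduction of iid sums
  have hintT : ∀ T : Set (ℝ × ℝ × ℝ), MeasurableSet T → ∀ i : Fin n,
      Integrable (fun ω => if (Xs i ω, Ys i ω, Us i ω) ∈ T then (1:ℝ) else 0) ℙ := by
    intro T hT i
    obtain ⟨h1, h2, h3⟩ := hm i
    have hmg : Measurable fun ω => if (Xs i ω, Ys i ω, Us i ω) ∈ T then (1:ℝ) else 0 :=
      (Measurable.ite (p := fun q : ℝ × ℝ × ℝ => q ∈ T) hT
        (measurable_const : Measurable fun _ : ℝ × ℝ × ℝ => (1:ℝ))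
        (measurable_const : Measurable fun _ : ℝ × ℝ × ℝ => (0:ℝ))).comp
        (h1.prodMk (h2.prodMk h3))
    refine Integrable.mono' (integrable_const (1:ℝ)) hmg.aestronglyMeasurable ?_
    filter_upwards with ω
    split_ifs <;> simp
  have hiidred : ∀ T : Set (ℝ × ℝ × ℝ), MeasurableSet T →
      ∫ ω, ((∑ i, if (Xs i ω, Ys i ω, Us i ω) ∈ T then (1:ℝ) else 0) / n) ∂ℙ
        = ∫ ω, (if (X ω, Y ω, U ω) ∈ T then (1:ℝ) else 0) ∂ℙ := by
    intro T hT
    have hg : Measurable (fun p : ℝ × ℝ × ℝ => if p ∈ T then (1:ℝ) else 0) :=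
      Measurable.ite hT measurable_const measurable_const
    rw [integral_div, integral_finset_sum _ (fun i _ => hintT T hT i)]
    have heach : ∀ i : Fin n,
        ∫ ω, (if (Xs i ω, Ys i ω, Us i ω) ∈ T then (1:ℝ) else 0) ∂ℙ
          = ∫ ω, (if (X ω, Y ω, U ω) ∈ T then (1:ℝ) else 0) ∂ℙ :=
      fun i => ((hid i).comp hg).integral_eq
    rw [Finset.sum_congr rfl (fun i _ => heach i), Finset.sum_const,
      Finset.card_univ, Fintype.card_fin, nsmul_eq_mul]
    exact mul_div_cancel_left₀ _ hn'
  -- integrability of averaged sums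
  have hintavg : ∀ T : Set (ℝ × ℝ × ℝ), MeasurableSet T →
      Integrable (fun ω => ((∑ i, if (Xs i ω, Ys i ω, Us i ω) ∈ T then (1:ℝ) else 0) / n)) ℙ :=
    fun T hT => (integrable_finset_sum _ (fun i _ => hintT T hT i)).div_const n
  -- integrability of X and Y
  have hXint : Integrable X ℙ := by
    refine Integrable.mono' (integrable_const |c|) hXm.aestronglyMeasurable ?_
    filter_upwards [hX] with ω h
    rw [Real.norm_eq_abs]
    exact abs_le.mpr ⟨by linarith [abs_nonneg c, h.1], by linarith [le_abs_self c, h.2]⟩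
  have hYint : Integrable Y ℙ := by
    refine Integrable.mono' (integrable_const (max |a| |b|)) hYm.aestronglyMeasurable ?_
    filter_upwards [hY] with ω h
    rw [Real.norm_eq_abs]
    refine abs_le.mpr ⟨?_, ?_⟩
    · have h1 := neg_abs_le a; have h2 := le_max_left |a| |b|; linarith [h.1]
    · have h1 := le_abs_self b; have h2 := le_max_right |a| |b|; linarith [h.2]
  -- the three measurable sets (triple form and pair form)
  set T1 : Set (ℝ × ℝ × ℝ) := {p | p.1 ≥ p.2.1 + δ * p.2.2} with hT1def
  have hT1 : MeasurableSet T1 :=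
    measurableSet_le (measurable_snd.fst.add (measurable_const.mul measurable_snd.snd))
      measurable_fst
  set S1 : Set ((ℝ × ℝ) × ℝ) := {q | q.1.1 ≥ q.1.2 + δ * q.2} with hS1def
  have hS1 : MeasurableSet S1 :=
    measurableSet_le (measurable_fst.snd.add (measurable_const.mul measurable_snd))
      measurable_fst.fst
  set T2 : Set (ℝ × ℝ × ℝ) := {p | p.1 > p.2.1 + δ + |c - a - δ| * p.2.2} with hT2def
  have hT2 : MeasurableSet T2 :=
    measurableSet_lt ((measurable_snd.fst.add measurable_const).add
      (measurable_const.mul measurable_snd.snd)) measurable_fst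
  set S2 : Set ((ℝ × ℝ) × ℝ) := {q | q.1.1 > q.1.2 + δ + |c - a - δ| * q.2} with hS2def
  have hS2 : MeasurableSet S2 :=
    measurableSet_lt ((measurable_fst.snd.add measurable_const).add
      (measurable_const.mul measurable_snd)) measurable_fst.fst
  set T3 : Set (ℝ × ℝ × ℝ) := {p | p.1 < b * p.2.2 ∧ b * p.2.2 < p.2.1} with hT3def
  have hT3 : MeasurableSet T3 :=
    (measurableSet_lt measurable_fst (measurable_const.mul measurable_snd.snd)).inter
      (measurableSet_lt (measurable_const.mul measurable_snd.snd) measurable_snd.fst)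
  set S3 : Set ((ℝ × ℝ) × ℝ) := {q | q.1.1 < b * q.2 ∧ b * q.2 < q.1.2} with hS3def
  have hS3 : MeasurableSet S3 :=
    (measurableSet_lt measurable_fst.fst (measurable_const.mul measurable_snd)).inter
      (measurableSet_lt (measurable_const.mul measurable_snd) measurable_fst.snd)
  -- bridges between goal-form indicators and set-membership indicators
  have e1 : (fun ω => (∑ i, if Xs i ω ≥ Ys i ω + δ * Us i ω then (1:ℝ) else 0) / n)
      = fun ω => (∑ i, @ite ℝ ((Xs i ω, Ys i ω, Us i ω) ∈ T1) (Classical.propDecidable _) 1 0) / n := by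
    funext ω; congr 1
  have e2 : (fun ω => (∑ i, if Xs i ω > Ys i ω + δ + |c - a - δ| * Us i ω then (1:ℝ) else 0) / n)
      = fun ω => (∑ i, @ite ℝ ((Xs i ω, Ys i ω, Us i ω) ∈ T2) (Classical.propDecidable _) 1 0) / n := by
    funext ω; congr 1
  have e3 : (fun ω => (∑ i, if Xs i ω < b * Us i ω ∧ b * Us i ω < Ys i ω then (1:ℝ) else 0) / n)
      = fun ω => (∑ i, @ite ℝ ((Xs i ω, Ys i ω, Us i ω) ∈ T3) (Classical.propDecidable _) 1 0) / n := by
    funext ω; congr 1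
    refine Finset.sum_congr rfl fun i _ => ?_
    by_cases h : Xs i ω < b * Us i ω ∧ b * Us i ω < Ys i ω
    · rw [if_pos h, if_pos (show (Xs i ω, Ys i ω, Us i ω) ∈ T3 from h)]
    · rw [if_neg h, if_neg (show (Xs i ω, Ys i ω, Us i ω) ∉ T3 from h)]
  have hI1 : ∫ ω, ((∑ i, if Xs i ω ≥ Ys i ω + δ * Us i ω then (1:ℝ) else 0) / n) ∂ℙ
      = ∫ p, (ν (Prod.mk p ⁻¹' S1)).toReal ∂μ := by
    rw [e1, hiidred T1 hT1]
    exact (key S1 hS1).1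
  have hI2 : ∫ ω, ((∑ i, if Xs i ω > Ys i ω + δ + |c - a - δ| * Us i ω then (1:ℝ) else 0) / n) ∂ℙ
      = ∫ p, (ν (Prod.mk p ⁻¹' S2)).toReal ∂μ := by
    rw [e2, hiidred T2 hT2]
    exact (key S2 hS2).1
  have hI3 : ∫ ω, ((∑ i, if Xs i ω < b * Us i ω ∧ b * Us i ω < Ys i ω then (1:ℝ) else 0) / n) ∂ℙ
      = ∫ p, (ν (Prod.mk p ⁻¹' S3)).toReal ∂μ := by
    rw [e3, hiidred T3 hT3]
    exact (key S3 hS3).1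
  -- integrability of the averaged sums (goal form)
  have hA : Integrable (fun ω => (∑ i, if Xs i ω ≥ Ys i ω + δ * Us i ω then (1:ℝ) else 0) / n) ℙ := by
    rw [e1]; exact hintavg T1 hT1
  have hB : Integrable (fun ω => (∑ i, if Xs i ω > Ys i ω + δ + |c - a - δ| * Us i ω then (1:ℝ) else 0) / n) ℙ := by
    rw [e2]; exact hintavg T2 hT2
  have hD : Integrable (fun ω => (∑ i, if Xs i ω < b * Us i ω ∧ b * Us i ω < Ys i ω then (1:ℝ) else 0) / n) ℙ := by
    rw [e3]; exact hintavg T3 hT3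
  set C := ∫ ω', Y ω' ∂ℙ with hCdef
  -- split the left-hand side
  have hg1 : Integrable (fun ω => C
      + δ * ((∑ i, if Xs i ω ≥ Ys i ω + δ * Us i ω then (1:ℝ) else 0) / n)) ℙ :=
    (integrable_const C).add (hA.const_mul δ)
  have hg2 : Integrable (fun ω => C
      + δ * ((∑ i, if Xs i ω ≥ Ys i ω + δ * Us i ω then (1:ℝ) else 0) / n)
      + |c - a - δ| *
          ((∑ i, if Xs i ω > Ys i ω + δ + |c - a - δ| * Us i ω then (1:ℝ) else 0) / n)) ℙ :=
    hg1.add (hB.const_mul (|c - a - δ|))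
  rw [integral_sub hg2 (hD.const_mul b), integral_add hg1 (hB.const_mul (|c - a - δ|)),
    integral_add (integrable_const C) (hA.const_mul δ),
    integral_const_mul, integral_const_mul, integral_const_mul, integral_const]
  simp only [probReal_univ, one_smul]
  rw [hI1, hI2, hI3]
  -- move everything to μ
  have hC : C = ∫ p, p.2 ∂μ :=
    (integral_map hWm.aemeasurable measurable_snd.aestronglyMeasurable).symm
  have hXeq : ∫ ω, X ω ∂ℙ = ∫ p, p.1 ∂μ :=
    (integral_map hWm.aemeasurable measurable_fst.aestronglyMeasurable).symm
  have hInt2 : Integrable (fun p : ℝ × ℝ => p.2) μ :=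
    (integrable_map_measure measurable_snd.aestronglyMeasurable hWm.aemeasurable).mpr hYint
  have k1 : Integrable (fun p : ℝ × ℝ => δ * (ν (Prod.mk p ⁻¹' S1)).toReal) μ :=
    (key S1 hS1).2.const_mul δ
  have k2 : Integrable (fun p : ℝ × ℝ => |c - a - δ| * (ν (Prod.mk p ⁻¹' S2)).toReal) μ :=
    (key S2 hS2).2.const_mul (|c - a - δ|)
  have k3 : Integrable (fun p : ℝ × ℝ => b * (ν (Prod.mk p ⁻¹' S3)).toReal) μ :=
    (key S3 hS3).2.const_mul b
  have k12 : Integrable (fun p : ℝ × ℝ =>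
      p.2 + δ * (ν (Prod.mk p ⁻¹' S1)).toReal) μ := hInt2.add k1
  have k123 : Integrable (fun p : ℝ × ℝ =>
      p.2 + δ * (ν (Prod.mk p ⁻¹' S1)).toReal
        + |c - a - δ| * (ν (Prod.mk p ⁻¹' S2)).toReal) μ := k12.add k2
  rw [hC, hXeq,
    ← integral_const_mul, ← integral_const_mul, ← integral_const_mul,
    ← integral_add hInt2 k1, ← integral_add k12 k2, ← integral_sub k123 k3]
  -- pointwise identity
  have hbnd : ∀ᵐ p ∂μ, (0 ≤ p.1 ∧ p.1 ≤ c) ∧ (a ≤ p.2 ∧ p.2 ≤ b) := by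
    rw [hμdef]
    have hs : MeasurableSet {p : ℝ × ℝ | (0 ≤ p.1 ∧ p.1 ≤ c) ∧ (a ≤ p.2 ∧ p.2 ≤ b)} :=
      ((measurableSet_le measurable_const measurable_fst).inter
        (measurableSet_le measurable_fst measurable_const)).inter
        ((measurableSet_le measurable_const measurable_snd).inter
          (measurableSet_le measurable_snd measurable_const))
    rw [ae_map_iff hWm.aemeasurable hs]
    filter_upwards [hX, hY] with ω h1 h2
    exact ⟨h1, h2⟩
  refine integral_congr_ae ?_
  filter_upwards [hbnd] with p hp
  obtain ⟨⟨h1, h2⟩, h3, h4⟩ := hp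
  have hcore := core_identity c a b δ p.1 p.2 h1 h2 h3 h4
  rw [hνdef, Measure.restrict_apply (measurable_prodMk_left hS1),
    Measure.restrict_apply (measurable_prodMk_left hS2),
    Measure.restrict_apply (measurable_prodMk_left hS3)]
  exact hcore
end
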